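/- arXiv:math-ph/0406028 — 3 statements merged into one kernel-verified Lean document; each statement's English description precedes it below -/
import Mathlib

section
/- The Barnes zeta function ζ_B(s,a) for dimension d has residue 1/(d−1)! at s = d; i.e., lim_{s→d} (s−d) · ∑_{n≥0} C(d+n−1,n)(n+a)^(−s) = 1/(d−1)! for real a > 0. -/
open Filter Topology

lemma aux_summable (a : ℝ) (ha : 0 < a) {t : ℝ} (ht : 1 < t) :
    Summable (fun n : ℕ => ((n : ℝ) + a) ^ (-t)) := by
  have h := (Real.summable_one_div_nat_add_rpow a t).2 ht
  refine h.congr fun n => ?_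
  have h1 : (0:ℝ) < (n:ℝ) + a := by positivity
  rw [abs_of_pos h1, Real.rpow_neg h1.le, one_div]

lemma aux_mvt {c : ℝ} (hc : 0 < c) {b : ℝ} (hb : 0 < b) :
    c * (b+1) ^ (-(c+1)) ≤ b ^ (-c) - (b+1) ^ (-c) ∧
      b ^ (-c) - (b+1) ^ (-c) ≤ c * b ^ (-(c+1)) := by
  have hb1 : b < b + 1 := by linarith
  have hcont : ContinuousOn (fun x : ℝ => x ^ (-c)) (Set.Icc b (b+1)) := by
    apply ContinuousOn.rpow_const continuousOn_id
    intro x hx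
    exact Or.inl (by simp only [id]; nlinarith [hx.1])
  have hderiv : ∀ x ∈ Set.Ioo b (b+1),
      HasDerivAt (fun x : ℝ => x ^ (-c)) ((-c) * x ^ (-c - 1)) x := by
    intro x hx
    exact Real.hasDerivAt_rpow_const (Or.inl (by nlinarith [hx.1]))
  obtain ⟨ξ, hξ, hslope⟩ := exists_hasDerivAt_eq_slope (fun x : ℝ => x ^ (-c))
    (fun x => (-c) * x ^ (-c - 1)) hb1 hcont hderiv
  have hξ0 : 0 < ξ := lt_trans hb hξ.1
  have heq : b ^ (-c) - (b+1) ^ (-c) = c * ξ ^ (-(c+1)) := by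
    have : (-c) * ξ ^ (-c - 1) = ((b+1) ^ (-c) - b ^ (-c)) / (b + 1 - b) := hslope
    rw [show (-(c+1)) = -c - 1 by ring]
    have h2 : b + 1 - b = 1 := by ring
    rw [h2, div_one] at this
    linarith [this]
  constructor
  · rw [heq]
    have := Real.rpow_le_rpow_of_nonpos hξ0 hξ.2.le (by linarith : -(c+1) ≤ 0)
    nlinarith
  · rw [heq]
    have := Real.rpow_le_rpow_of_nonpos hb hξ.1.le (by linarith : -(c+1) ≤ 0)
    nlinarith

lemma aux_telescope (a : ℝ) (ha : 0 < a) {c : ℝ} (hc : 0 < c) :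
    HasSum (fun n : ℕ => ((n:ℝ)+a) ^ (-c) - ((n:ℝ)+1+a) ^ (-c)) (a ^ (-c)) := by
  set F : ℕ → ℝ := fun n => ((n:ℝ)+a) ^ (-c) with hF
  have hFn : ∀ n : ℕ, F (n+1) = ((n:ℝ)+1+a) ^ (-c) := by
    intro n; simp only [hF]; push_cast; ring_nf
  have hanti : ∀ n : ℕ, F (n+1) ≤ F n := by
    intro n
    apply Real.rpow_le_rpow_of_nonpos (by positivity) (by push_cast; linarith) (by linarith)
  have hnonneg : ∀ n : ℕ, 0 ≤ F n - F (n+1) := fun n => by linarith [hanti n]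
  have hpart : ∀ N : ℕ, ∑ i ∈ Finset.range N, (F i - F (i+1)) = F 0 - F N :=
    fun N => Finset.sum_range_sub' F N
  have hFpos : ∀ n, 0 ≤ F n := fun n => Real.rpow_nonneg (by positivity) _
  have hsum : Summable (fun n => F n - F (n+1)) := by
    apply summable_of_sum_range_le (c := F 0) hnonneg
    intro n; rw [hpart]; linarith [hFpos n]
  have hlim : Tendsto F atTop (𝓝 0) := by
    have h1 : Tendsto (fun x : ℝ => x ^ (-c)) atTop (𝓝 0) :=
      tendsto_rpow_neg_atTop hc
    have h2 : Tendsto (fun n : ℕ => (n:ℝ) + a) atTop atTop :=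
      tendsto_atTop_add_const_right _ a tendsto_natCast_atTop_atTop
    exact h1.comp h2
  have h3 : Tendsto (fun N => ∑ i ∈ Finset.range N, (F i - F (i+1))) atTop (𝓝 (F 0)) := by
    simp only [hpart]
    have := (tendsto_const_nhds (x := F 0)).sub hlim
    simpa using this
  have h4 := hsum.hasSum.tendsto_sum_nat
  have h5 : ∑' n, (F n - F (n+1)) = F 0 := tendsto_nhds_unique h4 h3
  have h6 : F 0 = a ^ (-c) := by simp [hF]
  have := hsum.hasSum
  rw [h5, h6] at this
  exact this.congr_fun fun n => by rw [hFn n]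

lemma aux_const_rpow_cont (a : ℝ) (ha : 0 < a) (f : ℝ → ℝ) (hf : Continuous f) :
    Continuous fun t : ℝ => a ^ (f t) := by
  have : (fun t : ℝ => a ^ (f t)) = fun t => Real.exp (Real.log a * f t) :=
    funext fun t => Real.rpow_def_of_pos ha _
  rw [this]
  exact Real.continuous_exp.comp (continuous_const.mul hf)

lemma aux_tail (a : ℝ) (ha : 0 < a) {t : ℝ} (ht : 1 < t) :
    ∑' n : ℕ, ((n:ℝ)+1+a) ^ (-t) = (∑' n : ℕ, ((n:ℝ)+a) ^ (-t)) - a ^ (-t) := by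
  have hs := aux_summable a ha ht
  have h0 := Summable.tsum_eq_zero_add hs
  have : (fun n : ℕ => (((n:ℕ)+1:ℕ):ℝ) + a) = fun n : ℕ => ((n:ℝ)+1+a) := by
    funext n; push_cast; ring
  rw [show ((0:ℕ):ℝ) + a = a by simp] at h0
  have h1 : ∑' n : ℕ, ((((n:ℕ)+1:ℕ):ℝ) + a) ^ (-t) = ∑' n : ℕ, ((n:ℝ)+1+a) ^ (-t) := by
    congr 1; funext n; push_cast; ring_nf
  rw [h1] at h0
  linarith

lemma aux_residue (a : ℝ) (ha : 0 < a) :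
    Tendsto (fun t : ℝ => (t - 1) * ∑' n : ℕ, ((n:ℝ)+a) ^ (-t)) (𝓝[>] 1) (𝓝 1) := by
  have hlow : ∀ t : ℝ, 1 < t →
      a ^ (-(t-1)) ≤ (t - 1) * ∑' n : ℕ, ((n:ℝ)+a) ^ (-t) := by
    intro t ht
    have hc : (0:ℝ) < t - 1 := by linarith
    have htel := (aux_telescope a ha hc).tsum_eq
    have hsum := (aux_telescope a ha hc).summable
    have hbig : Summable fun n : ℕ => (t-1) * ((n:ℝ)+a) ^ (-t) :=
      (aux_summable a ha ht).mul_left _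
    have hle : ∀ n : ℕ, ((n:ℝ)+a) ^ (-(t-1)) - ((n:ℝ)+1+a) ^ (-(t-1))
        ≤ (t-1) * ((n:ℝ)+a) ^ (-t) := by
      intro n
      have hb : (0:ℝ) < (n:ℝ) + a := by positivity
      have := (aux_mvt hc hb).2
      rw [show -(t-1+1) = -t by ring, show (n:ℝ)+a+1 = (n:ℝ)+1+a by ring] at this
      exact this
    calc a ^ (-(t-1)) = ∑' n : ℕ, (((n:ℝ)+a) ^ (-(t-1)) - ((n:ℝ)+1+a) ^ (-(t-1))) := htel.symm
      _ ≤ ∑' n : ℕ, (t-1) * ((n:ℝ)+a) ^ (-t) := Summable.tsum_le_tsum hle hsum hbig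
      _ = (t-1) * ∑' n : ℕ, ((n:ℝ)+a) ^ (-t) := tsum_mul_left
  have hhigh : ∀ t : ℝ, 1 < t →
      (t - 1) * ∑' n : ℕ, ((n:ℝ)+a) ^ (-t) ≤ a ^ (-(t-1)) + (t-1) * a ^ (-t) := by
    intro t ht
    have hc : (0:ℝ) < t - 1 := by linarith
    have htel := (aux_telescope a ha hc).tsum_eq
    have hsum := (aux_telescope a ha hc).summable
    have hsmall : Summable fun n : ℕ => (t-1) * ((n:ℝ)+1+a) ^ (-t) := by
      have h2 : Summable fun n : ℕ => ((n:ℝ)+1+a) ^ (-t) := by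
        apply ((aux_summable a ha ht).comp_injective (add_right_injective 1)).congr
        intro n; simp only [Function.comp_apply]; push_cast; ring_nf
      exact h2.mul_left _
    have hle : ∀ n : ℕ, (t-1) * ((n:ℝ)+1+a) ^ (-t)
        ≤ ((n:ℝ)+a) ^ (-(t-1)) - ((n:ℝ)+1+a) ^ (-(t-1)) := by
      intro n
      have hb : (0:ℝ) < (n:ℝ) + a := by positivity
      have := (aux_mvt hc hb).1
      rw [show -(t-1+1) = -t by ring, show (n:ℝ)+a+1 = (n:ℝ)+1+a by ring] at this
      exact this
    have h3 : (t-1) * ∑' n : ℕ, ((n:ℝ)+1+a) ^ (-t) ≤ a ^ (-(t-1)) := by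
      calc (t-1) * ∑' n : ℕ, ((n:ℝ)+1+a) ^ (-t)
          = ∑' n : ℕ, (t-1) * ((n:ℝ)+1+a) ^ (-t) := tsum_mul_left.symm
        _ ≤ ∑' n : ℕ, (((n:ℝ)+a) ^ (-(t-1)) - ((n:ℝ)+1+a) ^ (-(t-1))) :=
            Summable.tsum_le_tsum hle hsmall hsum
        _ = a ^ (-(t-1)) := htel
    rw [aux_tail a ha ht] at h3
    nlinarith
  have hL : Tendsto (fun t : ℝ => a ^ (-(t-1))) (𝓝[>] 1) (𝓝 1) := by
    have hc := aux_const_rpow_cont a ha (fun t => -(t-1)) (by continuity)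
    have := hc.tendsto 1
    simp only [show -(1-1:ℝ) = 0 by ring, Real.rpow_zero] at this
    exact this.mono_left nhdsWithin_le_nhds
  have hU : Tendsto (fun t : ℝ => a ^ (-(t-1)) + (t-1) * a ^ (-t)) (𝓝[>] 1) (𝓝 1) := by
    have hc2 := aux_const_rpow_cont a ha (fun t => -t) (by continuity)
    have h4 : Tendsto (fun t : ℝ => (t-1) * a ^ (-t)) (𝓝 1) (𝓝 0) := by
      have hcm : Continuous fun t : ℝ => (t - 1) * a ^ (-t) :=
        (continuous_id.sub continuous_const).mul hc2
      have := hcm.tendsto 1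
      simpa using this
    have := hL.add (h4.mono_left nhdsWithin_le_nhds)
    simpa using this
  refine tendsto_of_tendsto_of_tendsto_of_le_of_le' hL hU ?_ ?_
  · filter_upwards [self_mem_nhdsWithin] with t ht using hlow t ht
  · filter_upwards [self_mem_nhdsWithin] with t ht using hhigh t ht

lemma aux_shift (x c : ℝ) : Tendsto (fun s : ℝ => s - c) (𝓝[>] x) (𝓝[>] (x - c)) := by
  apply tendsto_nhdsWithin_of_tendsto_nhds_of_eventually_within
  · exact ((continuous_id.sub continuous_const).tendsto x).mono_left nhdsWithin_le_nhds
  · filter_upwards [self_mem_nhdsWithin] with s hs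
    exact sub_lt_sub_right hs c

lemma aux_shifted_summable (a : ℝ) (ha : 0 < a) {t : ℝ} (ht : 1 < t) :
    Summable (fun n : ℕ => ((n : ℝ) + 1 + a) ^ (-t)) := by
  apply ((aux_summable a ha ht).comp_injective (add_right_injective 1)).congr
  intro n; simp only [Function.comp_apply]; push_cast; ring_nf

lemma aux_vanish (a : ℝ) (ha : 0 < a) (r : ℝ) (hr : 2 ≤ r) :
    Tendsto (fun t : ℝ => (t - r) * ∑' n : ℕ, ((n:ℝ)+a) ^ (-t)) (𝓝[>] r) (𝓝 0) := by
  set C : ℝ := ∑' n : ℕ, ((n:ℝ)+1+a) ^ (-(2:ℝ)) with hC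
  have hupper : ∀ t : ℝ, r < t →
      (t - r) * ∑' n : ℕ, ((n:ℝ)+a) ^ (-t) ≤ (t - r) * (a ^ (-t) + C) := by
    intro t ht
    have ht1 : 1 < t := by linarith
    have hZ : ∑' n : ℕ, ((n:ℝ)+a) ^ (-t) ≤ a ^ (-t) + C := by
      have h1 : ∑' n : ℕ, ((n:ℝ)+1+a) ^ (-t) ≤ C := by
        apply Summable.tsum_le_tsum _ (aux_shifted_summable a ha ht1)
          (aux_shifted_summable a ha (by norm_num))
        intro n
        apply Real.rpow_le_rpow_of_exponent_le
        · have : (0:ℕ) ≤ n := Nat.zero_le n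
          have : (0:ℝ) ≤ (n:ℝ) := Nat.cast_nonneg n
          linarith
        · linarith
      have h2 := aux_tail a ha ht1
      linarith
    have hpos : (0:ℝ) ≤ t - r := by linarith
    exact mul_le_mul_of_nonneg_left hZ hpos
  have hlower : ∀ t : ℝ, r < t → 0 ≤ (t - r) * ∑' n : ℕ, ((n:ℝ)+a) ^ (-t) := by
    intro t ht
    apply mul_nonneg (by linarith)
    exact tsum_nonneg fun n => Real.rpow_nonneg (by positivity) _
  have hU : Tendsto (fun t : ℝ => (t - r) * (a ^ (-t) + C)) (𝓝[>] r) (𝓝 0) := by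
    have hcont : Continuous fun t : ℝ => (t - r) * (a ^ (-t) + C) :=
      (continuous_id.sub continuous_const).mul
        ((aux_const_rpow_cont a ha (fun t => -t) (by continuity)).add continuous_const)
    have := hcont.tendsto r
    simp only [sub_self, zero_mul] at this
    exact this.mono_left nhdsWithin_le_nhds
  refine tendsto_of_tendsto_of_tendsto_of_le_of_le' tendsto_const_nhds hU ?_ ?_
  · filter_upwards [self_mem_nhdsWithin] with t ht using hlower t ht
  · filter_upwards [self_mem_nhdsWithin] with t ht using hupper t ht

lemma aux_nat (e n : ℕ) :
    ∏ i ∈ Finset.range e, (n + 1 + i) = e.factorial * (n + e).choose e := by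
  induction e with
  | zero => simp
  | succ e ih =>
    rw [Finset.prod_range_succ, ih, Nat.factorial_succ]
    have h := Nat.add_one_mul_choose_eq (n + e) e
    have h2 : n + 1 + e = (n + e) + 1 := by omega
    have h3 : n + (e + 1) = (n + e) + 1 := by omega
    rw [h2, h3]
    zify at h ⊢
    linear_combination (e.factorial : ℤ) * h

open Filter Topology in
/-- The Barnes zeta function `ζ_B(s,a) = ∑_{n≥0} C(d+n−1,n)(n+a)^{−s}` has residue
`1/(d−1)!` at `s = d`: `lim_{s→d⁺} (s−d) ζ_B(s,a) = 1/(d−1)!`. -/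
theorem barnes_zeta_residue_at_d (d : ℕ) (hd : 1 ≤ d) (a : ℝ) (ha : 0 < a) :
    Tendsto (fun s : ℝ =>
        (s - d) * ∑' n : ℕ, ((d + n - 1).choose n : ℝ) * ((n : ℝ) + a) ^ (-s))
      (𝓝[>] (d : ℝ)) (𝓝 (1 / (d - 1).factorial)) := by
  set e := d - 1 with he
  have hde : d = e + 1 := by omega
  have hcast : (d : ℝ) = (e : ℝ) + 1 := by rw [hde]; push_cast; ring
  set p : Polynomial ℝ :=
    ∏ i ∈ Finset.range e, (Polynomial.X + Polynomial.C ((i:ℝ) + 1 - a)) with hp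
  have hmonic : p.Monic :=
    Polynomial.monic_prod_of_monic _ _ fun i _ => Polynomial.monic_X_add_C _
  have hdeg : p.natDegree = e := by
    rw [hp, Polynomial.natDegree_prod _ _ (fun i _ => (Polynomial.monic_X_add_C _).ne_zero)]
    calc ∑ i ∈ Finset.range e, (Polynomial.X + Polynomial.C ((i:ℝ)+1-a)).natDegree
        = ∑ _i ∈ Finset.range e, 1 :=
          Finset.sum_congr rfl (fun i _ => Polynomial.natDegree_X_add_C _)
      _ = e := by simp
  have hcoeff_top : p.coeff e = 1 := by rw [← hdeg]; exact hmonic.coeff_natDegree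
  have heval : ∀ n : ℕ, p.eval ((n:ℝ) + a)
      = (e.factorial : ℝ) * ((d + n - 1).choose n : ℝ) := by
    intro n
    rw [hp, Polynomial.eval_prod]
    simp only [Polynomial.eval_add, Polynomial.eval_X, Polynomial.eval_C]
    have hc : ∀ i ∈ Finset.range e, (n:ℝ) + a + ((i:ℝ) + 1 - a) = ((n + 1 + i : ℕ) : ℝ) := by
      intro i _; push_cast; ring
    rw [Finset.prod_congr rfl hc, ← Nat.cast_prod, aux_nat e n]
    have h1 : d + n - 1 = n + e := by omega
    rw [h1]
    have h2 : (n + e).choose n = (n + e).choose e := Nat.choose_symm_add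
    rw [h2]
    push_cast; ring
  -- pointwise decomposition of each term
  have hterm : ∀ s : ℝ, ∀ n : ℕ, ((d + n - 1).choose n : ℝ) * ((n : ℝ) + a) ^ (-s)
      = ∑ k ∈ Finset.range d, (p.coeff k / (e.factorial : ℝ)) * ((n:ℝ)+a) ^ (-(s - k)) := by
    intro s n
    have hx : (0:ℝ) < (n:ℝ) + a := by positivity
    have hev : p.eval ((n:ℝ)+a) = ∑ k ∈ Finset.range d, p.coeff k * ((n:ℝ)+a) ^ k := by
      have h := Polynomial.eval_eq_sum_range (p := p) ((n:ℝ)+a)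
      rw [hdeg, ← hde] at h
      exact h
    have hfac : (0:ℝ) < (e.factorial : ℝ) := by positivity
    have hch : ((d + n - 1).choose n : ℝ) = p.eval ((n:ℝ)+a) / (e.factorial : ℝ) := by
      rw [heval n]; field_simp
    rw [hch, hev, Finset.sum_div, Finset.sum_mul]
    apply Finset.sum_congr rfl
    intro k _
    have hpow : ((n:ℝ)+a) ^ k * ((n:ℝ)+a) ^ (-s) = ((n:ℝ)+a) ^ (-(s - (k:ℝ))) := by
      rw [← Real.rpow_natCast ((n:ℝ)+a) k, ← Real.rpow_add hx]
      ring_nf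
    rw [← hpow]
    ring
  -- key identity valid for s > d
  have key : ∀ s : ℝ, (d:ℝ) < s →
      (s - d) * ∑' n : ℕ, ((d + n - 1).choose n : ℝ) * ((n : ℝ) + a) ^ (-s)
      = ∑ k ∈ Finset.range d, (p.coeff k / (e.factorial : ℝ))
          * ((s - d) * ∑' n : ℕ, ((n:ℝ)+a) ^ (-(s - k))) := by
    intro s hs
    have hsummk : ∀ k ∈ Finset.range d,
        Summable fun n : ℕ => (p.coeff k / (e.factorial : ℝ)) * ((n:ℝ)+a) ^ (-(s - k)) := by
      intro k hk
      have hk' : (k:ℝ) < d := by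
        exact_mod_cast Finset.mem_range.mp hk
      have h1 : 1 < s - k := by
        have : (k:ℝ) ≤ (d:ℝ) - 1 := by
          have := Finset.mem_range.mp hk
          have : k ≤ d - 1 := by omega
          calc (k:ℝ) ≤ ((d-1:ℕ):ℝ) := by exact_mod_cast this
            _ = (d:ℝ) - 1 := by rw [hde]; push_cast; ring
        linarith
      exact (aux_summable a ha h1).mul_left _
    rw [tsum_congr (hterm s), Summable.tsum_finsetSum hsummk, Finset.mul_sum]
    apply Finset.sum_congr rfl
    intro k _
    rw [tsum_mul_left]
    ring
  -- limits of individual terms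
  have hlimit : Tendsto (fun s : ℝ => ∑ k ∈ Finset.range d, (p.coeff k / (e.factorial : ℝ))
          * ((s - d) * ∑' n : ℕ, ((n:ℝ)+a) ^ (-(s - k))))
      (𝓝[>] (d:ℝ)) (𝓝 (∑ k ∈ Finset.range d,
        if k = e then (1 : ℝ) / (e.factorial : ℝ) else 0)) := by
    apply tendsto_finset_sum
    intro k hk
    by_cases hke : k = e
    · simp only [if_pos hke]
      have hmap := aux_shift (d:ℝ) (k:ℝ)
      rw [show (d:ℝ) - (k:ℝ) = 1 by rw [hcast, hke]; ring] at hmap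
      have hcomp := (aux_residue a ha).comp hmap
      have heq : (fun s : ℝ => ((fun t : ℝ => (t - 1) * ∑' n : ℕ, ((n:ℝ)+a) ^ (-t)) ((fun s : ℝ => s - (k:ℝ)) s)))
          = fun s : ℝ => (s - (d:ℝ)) * ∑' n : ℕ, ((n:ℝ)+a) ^ (-(s - (k:ℝ))) := by
        funext s
        simp only []
        rw [show s - (k:ℝ) - 1 = s - (d:ℝ) by rw [hcast, hke]; ring]
      rw [Function.comp_def, heq] at hcomp
      have := hcomp.const_mul ((p.coeff k / (e.factorial : ℝ)))
      simpa [hke, hcoeff_top] using this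
    · have hklt : k < e := by
        have := Finset.mem_range.mp hk
        omega
      have hr : (2:ℝ) ≤ (d:ℝ) - k := by
        have : k + 2 ≤ d := by omega
        have h2 : ((k:ℝ) + 2) ≤ (d:ℝ) := by exact_mod_cast this
        linarith
      have hmap := aux_shift (d:ℝ) (k:ℝ)
      have hcomp := (aux_vanish a ha ((d:ℝ) - k) hr).comp hmap
      have heq2 : (fun s : ℝ => ((fun t : ℝ => (t - ((d:ℝ) - k)) * ∑' n : ℕ, ((n:ℝ)+a) ^ (-t)) ((fun s : ℝ => s - (k:ℝ)) s)))
          = fun s : ℝ => (s - (d:ℝ)) * ∑' n : ℕ, ((n:ℝ)+a) ^ (-(s - (k:ℝ))) := by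
        funext s
        simp only []
        rw [show s - (k:ℝ) - ((d:ℝ) - k) = s - (d:ℝ) by ring]
      rw [Function.comp_def, heq2] at hcomp
      have := hcomp.const_mul ((p.coeff k / (e.factorial : ℝ)))
      simp only [if_neg hke]
      simpa using this
  -- final assembly
  have hsum_eq : (∑ k ∈ Finset.range d,
      if k = e then (1 : ℝ) / (e.factorial : ℝ) else 0) = 1 / ((d-1).factorial : ℝ) := by
    have hmem : e ∈ Finset.range d := Finset.mem_range.mpr (by omega)
    simp [Finset.sum_ite_eq', hmem, he]
    exact fun h => absurd h (by omega)
  rw [← hsum_eq]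
  apply hlimit.congr'
  filter_upwards [self_mem_nhdsWithin] with s hs
  exact (key s hs).symm
end

section
/- The Barnes zeta function ζ_B(s,a) for dimension d ≥ 2 has residue (d−2a)/(2(d−2)!) at s = d−1. -/
open Filter Topology Complex Finset Polynomial HurwitzZeta

lemma barnes_split (a : ℝ) (ha : 0 < a) : ∃ (m : ℕ) (b : ℝ), 0 < b ∧ b ≤ 1 ∧ a = m + b := by
  rcases eq_or_ne (Int.fract a) 0 with h | h
  · have hfl : (⌊a⌋ : ℝ) = a := by
      have := Int.fract_add_floor a
      rw [h] at this; linarith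
    have h1 : 1 ≤ ⌊a⌋ := by
      by_contra hc
      push_neg at hc
      have : (⌊a⌋ : ℝ) ≤ 0 := by exact_mod_cast Int.lt_add_one_iff.mp hc
      linarith
    refine ⟨(⌊a⌋ - 1).toNat, 1, one_pos, le_refl 1, ?_⟩
    have : ((⌊a⌋ - 1).toNat : ℝ) = (⌊a⌋ : ℝ) - 1 := by
      exact_mod_cast congrArg Int.cast (Int.toNat_of_nonneg (by omega))
    rw [this]; linarith
  · refine ⟨⌊a⌋.toNat, Int.fract a, (Int.fract_nonneg a).lt_of_ne' h, (Int.fract_lt_one a).le, ?_⟩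
    have h0 : (0:ℤ) ≤ ⌊a⌋ := Int.floor_nonneg.mpr ha.le
    have h2 := Int.floor_add_fract a
    have : (⌊a⌋.toNat : ℝ) = (⌊a⌋ : ℝ) := by exact_mod_cast congrArg Int.cast (Int.toNat_of_nonneg h0)
    rw [this]; linarith

lemma barnes_base_ne_zero (n : ℕ) (b : ℝ) (hb : 0 < b) : ((n : ℂ) + b) ≠ 0 := by
  intro hc
  have h1 : ((n : ℂ) + b).re = 0 := by rw [hc]; simp
  simp only [Complex.add_re, Complex.natCast_re, Complex.ofReal_re] at h1
  have : (0:ℝ) < (n : ℝ) + b := by positivity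
  linarith

lemma barnes_B (a : ℝ) (ha : 0 < a) :
    ∃ B : ℂ → ℂ,
      (∀ s : ℂ, s ≠ 1 → DifferentiableAt ℂ B s) ∧
      (∀ s : ℂ, 1 < s.re → HasSum (fun n : ℕ => ((n : ℂ) + a) ^ (-s)) (B s)) ∧
      Tendsto (fun s => (s - 1) * B s) (𝓝[≠] (1:ℂ)) (𝓝 1) := by
  obtain ⟨m, b, hb0, hb1, hab⟩ := barnes_split a ha
  refine ⟨fun s => hurwitzZeta (b : UnitAddCircle) s - ∑ n ∈ Finset.range m, 1 / ((n : ℂ) + b) ^ s,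
    ?_, ?_, ?_⟩
  · intro s hs
    refine (differentiableAt_hurwitzZeta _ hs).sub (DifferentiableAt.fun_sum fun n _ => ?_)
    simp only [one_div, ← cpow_neg]
    exact DifferentiableAt.const_cpow (differentiableAt_id.neg) (Or.inl (barnes_base_ne_zero n b hb0))
  · intro s hs
    have h1 := hasSum_hurwitzZeta_of_one_lt_re (Set.mem_Icc.mpr ⟨hb0.le, hb1⟩) hs
    have h2 := (hasSum_nat_add_iff' (f := fun n : ℕ => 1 / ((n : ℂ) + b) ^ s) m).mpr h1
    convert h2 using 2 with n
    · rfl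
    rw [hab]
    push_cast
    rw [cpow_neg, one_div]
    ring_nf
  · have h1 := hurwitzZeta_residue_one (b : UnitAddCircle)
    have h2 : Tendsto (fun s : ℂ => (s - 1) * ∑ n ∈ Finset.range m, 1 / ((n : ℂ) + b) ^ s)
        (𝓝[≠] (1:ℂ)) (𝓝 0) := by
      have hc : Continuous fun s : ℂ => (s - 1) * ∑ n ∈ Finset.range m, 1 / ((n : ℂ) + b) ^ s := by
        refine (continuous_id.sub continuous_const).mul (continuous_finset_sum _ fun n _ => ?_)
        simp only [one_div, ← cpow_neg]
        exact Continuous.const_cpow continuous_neg (Or.inl (barnes_base_ne_zero n b hb0))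
      have := hc.tendsto 1
      simp only [sub_self, zero_mul] at this
      exact this.mono_left nhdsWithin_le_nhds
    have := h1.sub h2
    simpa [mul_sub] using this

lemma prod_eq_ascFactorial' (n k : ℕ) : ∏ j ∈ Finset.range k, (n + j + 1) = (n + 1).ascFactorial k := by
  induction k with
  | zero => simp
  | succ k ih => rw [Finset.prod_range_succ, ih, Nat.ascFactorial_succ]; ring

lemma choose_prod (e n : ℕ) :
    ∏ j ∈ Finset.range (e + 1), (n + j + 1) = (e + 2 + n - 1).choose n * (e + 1).factorial := by
  rw [prod_eq_ascFactorial', Nat.ascFactorial_eq_factorial_mul_choose]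
  have h1 : e + 2 + n - 1 = n + (e + 1) := by omega
  rw [h1, mul_comm]
  congr 1
  rw [← Nat.choose_symm (Nat.le_add_left (e+1) n)]
  congr 1
  omega

open Filter Topology in
/-- The meromorphic continuation of the Barnes zeta function
`ζ_B(s,a) = ∑_{n≥0} C(d+n−1,n)(n+a)^{−s}` (for `d ≥ 2`, `a > 0`) has residue
`(d−2a)/(2(d−2)!)` at `s = d−1`: there is an analytic function on a connected
neighbourhood region `{Re s > d−2} \ {d, d−1}` agreeing with the series for
`Re s > d` whose product with `(s−(d−1))` tends to `(d−2a)/(2(d−2)!)`. -/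
theorem barnes_zeta_residue_at_d_sub_one (d : ℕ) (hd : 2 ≤ d) (a : ℝ) (ha : 0 < a) :
    ∃ g : ℂ → ℂ,
      AnalyticOnNhd ℂ g ({z : ℂ | (d : ℝ) - 2 < z.re} \ {(d : ℂ), (d : ℂ) - 1}) ∧
      (∀ s : ℂ, (d : ℝ) < s.re →
        g s = ∑' n : ℕ, ((d + n - 1).choose n : ℂ) * ((n : ℂ) + a) ^ (-s)) ∧
      Tendsto (fun s : ℂ => (s - ((d : ℂ) - 1)) * g s)
        (𝓝[≠] ((d : ℂ) - 1))
        (𝓝 (((d : ℂ) - 2 * a) / (2 * (d - 2).factorial))) := by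
  obtain ⟨e, rfl⟩ : ∃ e, d = e + 2 := ⟨d - 2, by omega⟩
  obtain ⟨B, hBdiff, hBsum, hBres⟩ := barnes_B a ha
  set Q : Polynomial ℂ := ∏ j ∈ Finset.range (e + 1), (X + C ((j : ℂ) + 1 - a)) with hQdef
  -- degree bound
  have hQdeg : Q.natDegree < e + 2 := by
    refine lt_of_le_of_lt (Polynomial.natDegree_prod_le _ _) ?_
    have h : ∀ i ∈ Finset.range (e+1), (X + C ((i : ℂ) + 1 - (a:ℂ))).natDegree = 1 :=
      fun i _ => Polynomial.natDegree_X_add_C _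
    rw [Finset.sum_congr rfl h]
    simp
  -- evaluation identity
  have hQeval : ∀ n : ℕ, Q.eval ((n : ℂ) + a)
      = ((e + 2 + n - 1).choose n : ℂ) * ((e+1).factorial : ℂ) := by
    intro n
    rw [hQdef, Polynomial.eval_prod]
    have h1 : ∀ j ∈ Finset.range (e+1),
        Polynomial.eval ((n:ℂ) + a) (X + C ((j : ℂ) + 1 - a)) = ((n + j + 1 : ℕ) : ℂ) := by
      intro j _
      simp only [Polynomial.eval_add, Polynomial.eval_X, Polynomial.eval_C]
      push_cast
      ring
    rw [Finset.prod_congr rfl h1, ← Nat.cast_prod, choose_prod e n]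
    push_cast
    ring
  -- coefficient e
  have hQcoeff : Q.coeff e = ∑ j ∈ Finset.range (e + 1), ((j : ℂ) + 1 - a) := by
    have h := Finset.prod_X_add_C_coeff (Finset.range (e + 1)) (fun j => (j : ℂ) + 1 - (a:ℂ))
      (k := e) (by simp)
    rw [hQdef, h]
    simp only [Finset.card_range]
    rw [show e + 1 - e = 1 by omega, Finset.powersetCard_one, Finset.sum_map]
    simp
  -- factorial nonzero
  have hfac : ((e+1).factorial : ℂ) ≠ 0 := Nat.cast_ne_zero.mpr (Nat.factorial_ne_zero _)
  refine ⟨fun s => (∑ k ∈ Finset.range (e + 2), Q.coeff k * B (s - (k : ℕ))) / ((e+1).factorial : ℂ),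
    ?_, ?_, ?_⟩
  · -- analyticity
    have hUopen : IsOpen ({z : ℂ | ((e+2 : ℕ) : ℝ) - 2 < z.re} \ {((e+2:ℕ) : ℂ), ((e+2:ℕ) : ℂ) - 1}) := by
      refine IsOpen.sdiff (isOpen_lt continuous_const Complex.continuous_re) ?_
      exact (Set.toFinite _).isClosed
    refine DifferentiableOn.analyticOnNhd (fun s hs => ?_) hUopen
    refine DifferentiableAt.differentiableWithinAt ?_
    refine DifferentiableAt.div_const ?_ _
    refine DifferentiableAt.fun_sum fun k hk => DifferentiableAt.const_mul ?_ _
    have hne : s - (k : ℕ) ≠ 1 := by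
      intro hc
      have hsval : s = 1 + (k : ℂ) := by linear_combination hc
      obtain ⟨hre, hnot⟩ := hs
      simp only [Set.mem_setOf_eq] at hre
      rw [hsval] at hre
      simp only [Complex.add_re, Complex.one_re, Complex.natCast_re] at hre
      push_cast at hre
      have hk2 : k < e + 2 := Finset.mem_range.mp hk
      have hke : e ≤ k := by
        have h' : (e:ℝ) < 1 + k := by linarith
        have h'' : e < 1 + k := by exact_mod_cast h'
        omega
      simp only [Set.mem_insert_iff, Set.mem_singleton_iff] at hnot
      push_neg at hnot
      rcases (by omega : k = e ∨ k = e + 1) with rfl | rfl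
      · exact hnot.2 (by rw [hsval]; push_cast; ring)
      · exact hnot.1 (by rw [hsval]; push_cast; ring)
    exact (hBdiff _ hne).comp s ((differentiableAt_id.sub (differentiableAt_const _)))
  · -- series identity
    intro s hs
    have hre : ∀ k ∈ Finset.range (e + 2), 1 < (s - (k:ℕ)).re := by
      intro k hk
      have hk2 : k < e + 2 := Finset.mem_range.mp hk
      have : (k : ℝ) ≤ (e : ℝ) + 1 := by exact_mod_cast Nat.lt_succ_iff.mp hk2
      simp only [Complex.sub_re, Complex.natCast_re]
      push_cast at hs
      linarith
    have hSum : ∀ k ∈ Finset.range (e + 2),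
        HasSum (fun n : ℕ => ((n : ℂ) + a) ^ (-(s - (k:ℕ)))) (B (s - (k:ℕ))) :=
      fun k hk => hBsum _ (hre k hk)
    have hxne : ∀ n : ℕ, ((n : ℂ) + a) ≠ 0 := fun n => barnes_base_ne_zero n a ha
    have hpow : ∀ k : ℕ, ∀ n : ℕ,
        ((n : ℂ) + a) ^ (-(s - (k:ℕ))) = ((n : ℂ) + a) ^ (k : ℕ) * ((n : ℂ) + a) ^ (-s) := by
      intro k n
      rw [show -(s - ((k:ℕ):ℂ)) = ((k:ℕ):ℂ) + (-s) by ring, Complex.cpow_add _ _ (hxne n),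
        Complex.cpow_natCast]
    have step1 : ∑ k ∈ Finset.range (e + 2), Q.coeff k * B (s - (k:ℕ))
        = ∑ k ∈ Finset.range (e + 2), ∑' n : ℕ, Q.coeff k * (((n : ℂ) + a) ^ (-(s - (k:ℕ)))) := by
      refine Finset.sum_congr rfl fun k hk => ?_
      rw [← (hSum k hk).tsum_eq, tsum_mul_left]
    have step2 : ∑ k ∈ Finset.range (e + 2), ∑' n : ℕ, Q.coeff k * (((n : ℂ) + a) ^ (-(s - (k:ℕ))))
        = ∑' n : ℕ, ∑ k ∈ Finset.range (e + 2), Q.coeff k * (((n : ℂ) + a) ^ (-(s - (k:ℕ)))) := by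
      exact (Summable.tsum_finsetSum fun k hk => ((hSum k hk).summable.mul_left _)).symm
    have step3 : ∀ n : ℕ, ∑ k ∈ Finset.range (e + 2), Q.coeff k * (((n : ℂ) + a) ^ (-(s - (k:ℕ))))
        = ((e + 2 + n - 1).choose n : ℂ) * ((e+1).factorial : ℂ) * (((n : ℂ) + a) ^ (-s)) := by
      intro n
      have : ∑ k ∈ Finset.range (e + 2), Q.coeff k * (((n : ℂ) + a) ^ (-(s - (k:ℕ))))
          = (∑ k ∈ Finset.range (e + 2), Q.coeff k * ((n : ℂ) + a) ^ (k:ℕ)) * ((n : ℂ) + a) ^ (-s) := by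
        rw [Finset.sum_mul]
        exact Finset.sum_congr rfl fun k _ => by rw [hpow k n]; ring
      rw [this, ← Polynomial.eval_eq_sum_range' hQdeg, hQeval n]
    calc (∑ k ∈ Finset.range (e + 2), Q.coeff k * B (s - (k:ℕ))) / ((e+1).factorial : ℂ)
        = (∑' n : ℕ, ((e + 2 + n - 1).choose n : ℂ) * ((e+1).factorial : ℂ)
            * (((n : ℂ) + a) ^ (-s))) / ((e+1).factorial : ℂ) := by
          rw [step1, step2]
          congr 1
          exact tsum_congr step3
      _ = ∑' n : ℕ, ((e + 2 + n - 1).choose n : ℂ) * ((n : ℂ) + a) ^ (-s) := by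
          have : ∀ n : ℕ, ((e + 2 + n - 1).choose n : ℂ) * ((e+1).factorial : ℂ)
              * (((n : ℂ) + a) ^ (-s))
              = ((e+1).factorial : ℂ) * (((e + 2 + n - 1).choose n : ℂ) * ((n : ℂ) + a) ^ (-s)) := by
            intro n; ring
          rw [tsum_congr this, tsum_mul_left, mul_div_cancel_left₀ _ hfac]
  · -- residue
    set p : ℂ := ((e+2:ℕ) : ℂ) - 1 with hp
    have hpe : p - ((e:ℕ) : ℂ) = 1 := by rw [hp]; push_cast; ring
    have hmain : Tendsto (fun s : ℂ => (s - p) * B (s - ((e:ℕ) : ℂ))) (𝓝[≠] p) (𝓝 1) := by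
      have hmap : Tendsto (fun s : ℂ => s - ((e:ℕ) : ℂ)) (𝓝[≠] p) (𝓝[≠] (1:ℂ)) := by
        rw [tendsto_nhdsWithin_iff]
        constructor
        · have h1 : Tendsto (fun s : ℂ => s - ((e:ℕ) : ℂ)) (𝓝 p) (𝓝 (p - ((e:ℕ) : ℂ))) :=
            (continuous_id.sub continuous_const).tendsto p
          rw [hpe] at h1
          exact h1.mono_left nhdsWithin_le_nhds
        · filter_upwards [self_mem_nhdsWithin] with s hs
          simp only [Set.mem_compl_iff, Set.mem_singleton_iff] at hs ⊢
          intro hc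
          apply hs
          have : s = 1 + ((e:ℕ) : ℂ) := by linear_combination hc
          rw [this, hp]; push_cast; ring
      have hcomp := hBres.comp hmap
      have heq : (fun s : ℂ => (s - p) * B (s - ((e:ℕ) : ℂ)))
          = (fun w : ℂ => (w - 1) * B w) ∘ (fun s : ℂ => s - ((e:ℕ) : ℂ)) := by
        funext s
        show (s - p) * B (s - ((e:ℕ):ℂ)) = (s - ((e:ℕ):ℂ) - 1) * B (s - ((e:ℕ):ℂ))
        congr 1
        rw [hp]; push_cast; ring
      rw [heq]
      exact hcomp
    have hterm : ∀ k ∈ Finset.range (e + 2),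
        Tendsto (fun s : ℂ => Q.coeff k * ((s - p) * B (s - (k:ℕ)))) (𝓝[≠] p)
          (𝓝 (if k = e then Q.coeff e else 0)) := by
      intro k hk
      rcases eq_or_ne k e with rfl | hke
      · simpa using tendsto_const_nhds.mul hmain
      · rw [if_neg hke]
        have hne : p - ((k:ℕ) : ℂ) ≠ 1 := by
          intro hc
          apply hke
          have : ((k:ℕ) : ℂ) = ((e:ℕ) : ℂ) := by
            rw [hp] at hc; push_cast at hc ⊢; linear_combination -hc
          exact_mod_cast this
        have hcont : ContinuousAt (fun s : ℂ => (s - p) * B (s - (k:ℕ))) p := by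
          refine (continuousAt_id.sub continuousAt_const).mul ?_
          exact ((hBdiff _ hne).comp p
            (differentiableAt_id.sub (differentiableAt_const _))).continuousAt
        have h0 : Tendsto (fun s : ℂ => (s - p) * B (s - (k:ℕ))) (𝓝[≠] p)
            (𝓝 ((p - p) * B (p - (k:ℕ)))) :=
          hcont.tendsto.mono_left nhdsWithin_le_nhds
        simp only [sub_self, zero_mul] at h0
        simpa using tendsto_const_nhds.mul h0
    have htot := tendsto_finset_sum (Finset.range (e + 2)) hterm
    have hsumval : ∑ k ∈ Finset.range (e + 2), (if k = e then Q.coeff e else 0) = Q.coeff e := by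
      rw [Finset.sum_ite_eq' (Finset.range (e+2)) e (fun _ => Q.coeff e)]
      simp [Nat.lt_succ_iff]
    rw [hsumval] at htot
    have htot2 := htot.div_const ((e+1).factorial : ℂ)
    have hfun : (fun s : ℂ => (s - (((e+2:ℕ):ℂ) - 1))
          * ((∑ k ∈ Finset.range (e + 2), Q.coeff k * B (s - (k:ℕ))) / ((e+1).factorial : ℂ)))
        = fun s : ℂ => (∑ k ∈ Finset.range (e + 2), Q.coeff k * ((s - p) * B (s - (k:ℕ))))
            / ((e+1).factorial : ℂ) := by
      funext s
      rw [hp, Finset.sum_div, Finset.sum_div, Finset.mul_sum]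
      exact Finset.sum_congr rfl fun k _ => by ring
    rw [hfun]
    have hval : Q.coeff e / ((e+1).factorial : ℂ)
        = (((e+2:ℕ) : ℂ) - 2 * a) / (2 * ((e + 2 - 2).factorial : ℂ)) := by
      have hgauss : (∑ j ∈ Finset.range (e+1), (j:ℂ)) * 2 = ((e:ℂ)+1) * e := by
        have hn : (∑ i ∈ Finset.range (e+1), i) * 2 = (e+1) * e := by
          rw [Finset.sum_range_id_mul_two, Nat.add_sub_cancel]
        have hcast : (∑ j ∈ Finset.range (e+1), (j:ℂ))
            = ((∑ j ∈ Finset.range (e+1), j : ℕ) : ℂ) := by push_cast; rfl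
        rw [hcast]
        exact_mod_cast hn
      rw [hQcoeff]
      have hsum : ∑ j ∈ Finset.range (e + 1), ((j : ℂ) + 1 - a)
          = (∑ j ∈ Finset.range (e+1), (j:ℂ)) + (e+1) * (1 - a) := by
        have h' : ∀ j ∈ Finset.range (e+1), ((j:ℂ) + 1 - a) = (j:ℂ) + (1 - (a:ℂ)) :=
          fun j _ => by ring
        rw [Finset.sum_congr rfl h', Finset.sum_add_distrib, Finset.sum_const, Finset.card_range,
          nsmul_eq_mul]
        push_cast
        ring
      rw [hsum]
      have hfe : ((e:ℕ) + 2 - 2) = e := by omega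
      rw [hfe]
      have hface : ((e).factorial : ℂ) ≠ 0 := Nat.cast_ne_zero.mpr (Nat.factorial_ne_zero _)
      rw [div_eq_div_iff hfac (mul_ne_zero two_ne_zero hface)]
      push_cast [Nat.factorial_succ]
      linear_combination ((e).factorial : ℂ) * hgauss
    rw [← hval]
    exact htot2
end

section
/- For the generalized Bernoulli polynomials B_n^(d)(a) defined by the generating function e^{−at}/(1−e^{−t})^d = (−1)^d ∑_{n≥0} ((−t)^{n−d}/n!) B_n^(d)(a), the residue of the Barnes zeta function at s = z for z ∈ {1,…,d} is Res_{s=z} ζ_B(s,a) = (−1)^{d+z}/((z−1)!(d−z)!) · B_{d−z}^(d)(a). -/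
set_option maxHeartbeats 1000000

open Filter Topology Set PowerSeries

namespace BarnesAux


/-- Geometric-type bound: if `∑ f n * t0^n` is summable and `|t| < t0`, terms are dominated. -/
lemma abs_summable_of_lt {f : ℕ → ℝ} {t0 : ℝ} (ht0 : 0 < t0)
    (hs : Summable fun n => f n * t0 ^ n) {t : ℝ} (ht : |t| < t0) :
    Summable fun n => |f n * t ^ n| := by
  obtain ⟨M, hM⟩ : ∃ M, ∀ n, |f n * t0 ^ n| ≤ M := by
    have h := (hs.tendsto_atTop_zero.abs).bddAbove_range
    obtain ⟨M, hM⟩ := h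
    exact ⟨M, fun n => hM ⟨n, rfl⟩⟩
  have hM0 : 0 ≤ M := le_trans (abs_nonneg _) (hM 0)
  have hr1 : |t| / t0 < 1 := (div_lt_one ht0).2 ht
  have hr0 : 0 ≤ |t| / t0 := div_nonneg (abs_nonneg _) ht0.le
  refine Summable.of_nonneg_of_le (fun n => abs_nonneg _) (fun n => ?_)
    (((summable_geometric_of_lt_one hr0 hr1)).mul_left M)
  have ht0n : (0:ℝ) < t0 ^ n := pow_pos ht0 n
  have : |f n * t ^ n| = |f n * t0 ^ n| * (|t| / t0) ^ n := by
    rw [abs_mul, abs_mul, abs_pow, abs_pow, div_pow, abs_of_pos ht0]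
    field_simp
  rw [this]
  exact mul_le_mul_of_nonneg_right (hM n) (pow_nonneg hr0 n)

lemma coeff_zero_of_tsum_zero {ε : ℝ} (hε : 0 < ε) (f : ℕ → ℝ)
    (hs : ∀ t ∈ Set.Ioo (0:ℝ) ε, Summable fun k => f k * t ^ k)
    (h0 : ∀ t ∈ Set.Ioo (0:ℝ) ε, ∑' k, f k * t ^ k = 0) : f 0 = 0 := by
  set t0 : ℝ := ε / 2 with ht0def
  have ht0 : (0:ℝ) < t0 := by positivity
  have ht0mem : t0 ∈ Set.Ioo (0:ℝ) ε := ⟨ht0, by rw [ht0def]; linarith⟩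
  obtain ⟨M, hM⟩ : ∃ M, ∀ n, |f n * t0 ^ n| ≤ M := by
    obtain ⟨M, hM⟩ := ((hs t0 ht0mem).tendsto_atTop_zero.abs).bddAbove_range
    exact ⟨M, fun n => hM ⟨n, rfl⟩⟩
  have hM0 : 0 ≤ M := le_trans (abs_nonneg _) (hM 0)
  have key : ∀ t ∈ Set.Ioo (0:ℝ) (t0/2), |f 0| ≤ 2 * M / t0 * t := by
    intro t ht
    have htε : t ∈ Set.Ioo (0:ℝ) ε := ⟨ht.1, by have := ht.2; rw [ht0def] at this; linarith⟩
    have hsum := hs t htε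
    have heq := h0 t htε
    have hshift : ∑' k, f k * t ^ k = f 0 * t ^ 0 + ∑' k, f (k+1) * t ^ (k+1) :=
      hsum.tsum_eq_zero_add
    have hf0 : f 0 = - ∑' k, f (k+1) * t ^ (k+1) := by
      rw [heq] at hshift
      rw [pow_zero, mul_one] at hshift
      linarith
    set r : ℝ := t / t0 with hrdef
    have hr0 : 0 ≤ r := div_nonneg ht.1.le ht0.le
    have hrhalf : r ≤ 1/2 := by
      rw [hrdef, div_le_div_iff₀ ht0 (by norm_num : (0:ℝ) < 2)]
      nlinarith [ht.2]
    have hr1 : r < 1 := lt_of_le_of_lt hrhalf (by norm_num)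
    have hbound : ∀ k, ‖f (k+1) * t ^ (k+1)‖ ≤ (M * r) * r ^ k := by
      intro k
      have habs : |f (k+1) * t ^ (k+1)| = |f (k+1) * t0 ^ (k+1)| * r ^ (k+1) := by
        rw [abs_mul, abs_mul, abs_pow, abs_pow, hrdef, div_pow,
          abs_of_pos ht0, abs_of_pos ht.1]
        field_simp
      rw [Real.norm_eq_abs, habs]
      calc |f (k+1) * t0 ^ (k+1)| * r ^ (k+1) ≤ M * r ^ (k+1) :=
            mul_le_mul_of_nonneg_right (hM _) (pow_nonneg hr0 _)
        _ = (M * r) * r ^ k := by rw [pow_succ]; ring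
    have hgeo : HasSum (fun k : ℕ => (M * r) * r ^ k) ((M * r) * (1 - r)⁻¹) :=
      (hasSum_geometric_of_lt_one hr0 hr1).mul_left _
    have h2 : |f 0| ≤ (M * r) * (1 - r)⁻¹ := by
      rw [hf0, abs_neg, ← Real.norm_eq_abs]
      exact tsum_of_norm_bounded hgeo hbound
    have h3 : (1 - r)⁻¹ ≤ 2 := by
      rw [inv_le_comm₀ (by linarith) (by norm_num)]
      linarith
    calc |f 0| ≤ (M * r) * (1 - r)⁻¹ := h2
      _ ≤ (M * r) * 2 := by
          apply mul_le_mul_of_nonneg_left h3 (by positivity)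
      _ = 2 * M / t0 * t := by rw [hrdef]; field_simp
  by_contra hne
  have hpos : 0 < |f 0| := abs_pos.2 hne
  set C : ℝ := 2 * M / t0 with hCdef
  have hC0 : 0 ≤ C := by positivity
  set q : ℝ := |f 0| / (2 * C + 1) with hqdef
  have hqpos : 0 < q := by positivity
  have hq : q * (2 * C + 1) = |f 0| := by
    rw [hqdef]; field_simp
  set t : ℝ := min (t0/4) q with htdef
  have htpos : 0 < t := lt_min (by positivity) hqpos
  have htmem : t ∈ Set.Ioo (0:ℝ) (t0/2) :=
    ⟨htpos, lt_of_le_of_lt (min_le_left _ _) (by linarith)⟩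
  have h1 : |f 0| ≤ C * t := key t htmem
  have h2 : t ≤ q := min_le_right _ _
  have h3 : |f 0| ≤ C * q := le_trans h1 (mul_le_mul_of_nonneg_left h2 hC0)
  nlinarith [hq, hpos, hC0, h3]

lemma eq_zero_of_tsum_zero {ε : ℝ} (hε : 0 < ε) :
    ∀ (n : ℕ) (f : ℕ → ℝ),
      (∀ t ∈ Set.Ioo (0:ℝ) ε, Summable fun k => f k * t ^ k) →
      (∀ t ∈ Set.Ioo (0:ℝ) ε, ∑' k, f k * t ^ k = 0) → f n = 0 := by
  intro n
  induction n with
  | zero => exact fun f hs h0 => coeff_zero_of_tsum_zero hε f hs h0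
  | succ n ih =>
    intro f hs h0
    have hf0 : f 0 = 0 := coeff_zero_of_tsum_zero hε f hs h0
    have hs' : ∀ t ∈ Set.Ioo (0:ℝ) ε, Summable fun k => f (k+1) * t ^ k := by
      intro t ht
      have h1 : Summable fun k => f (k+1) * t ^ (k+1) :=
        (summable_nat_add_iff 1).2 (hs t ht)
      have := h1.mul_left (1/t)
      refine this.congr fun k => ?_
      have ht0 : t ≠ 0 := ne_of_gt ht.1
      field_simp
      ring
    have h0' : ∀ t ∈ Set.Ioo (0:ℝ) ε, ∑' k, f (k+1) * t ^ k = 0 := by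
      intro t ht
      have hsum := hs t ht
      have hshift : ∑' k, f k * t ^ k = f 0 * t ^ 0 + ∑' k, f (k+1) * t ^ (k+1) :=
        hsum.tsum_eq_zero_add
      rw [h0 t ht, hf0, zero_mul, zero_add] at hshift
      have h1 : Summable fun k => f (k+1) * t ^ (k+1) :=
        (summable_nat_add_iff 1).2 hsum
      have ht0 : t ≠ 0 := ne_of_gt ht.1
      have : ∑' k, f (k+1) * t ^ k = (1/t) * ∑' k, f (k+1) * t ^ (k+1) := by
        rw [← tsum_mul_left]
        congr 1; funext k
        field_simp; ring
      rw [this, ← hshift, mul_zero]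
    exact ih (fun k => f (k+1)) hs' h0'




noncomputable def u : PowerSeries ℝ :=
  PowerSeries.mk fun n => (-1) ^ n / (n + 1).factorial

noncomputable def E (c : ℝ) : PowerSeries ℝ := PowerSeries.rescale c (PowerSeries.exp ℝ)

lemma coeff_E (c : ℝ) (n : ℕ) : PowerSeries.coeff (R := ℝ) n (E c) = c ^ n / n.factorial := by
  rw [E, PowerSeries.coeff_rescale, PowerSeries.coeff_exp]
  have : (algebraMap ℚ ℝ) (1 / n.factorial) = 1 / (n.factorial : ℝ) := by
    push_cast [map_div₀]
    simp
  rw [this]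
  ring

lemma constantCoeff_E (c : ℝ) : PowerSeries.constantCoeff (R := ℝ) (E c) = 1 := by
  rw [← PowerSeries.coeff_zero_eq_constantCoeff_apply, coeff_E]
  simp

lemma E_mul_E (c c' : ℝ) : E c * E c' = E (c + c') :=
  PowerSeries.exp_mul_exp_eq_exp_add c c'

lemma constantCoeff_u : PowerSeries.constantCoeff (R := ℝ) u = 1 := by
  rw [← PowerSeries.coeff_zero_eq_constantCoeff_apply, u, PowerSeries.coeff_mk]
  simp

lemma u_ne : PowerSeries.constantCoeff (R := ℝ) u ≠ 0 := by
  rw [constantCoeff_u]; exact one_ne_zero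

lemma u_ne_zero : u ≠ 0 := by
  intro h
  apply u_ne
  rw [h, map_zero]

lemma inv_mul_u : u⁻¹ * u = 1 := PowerSeries.inv_mul_cancel u u_ne

/-- The key differential identity `(X+1)u + X u' = 1`. -/
lemma key_u : ((PowerSeries.X : PowerSeries ℝ) + 1) * u + PowerSeries.X * (d⁄dX ℝ u) = 1 := by
  ext n
  rw [add_mul, one_mul, map_add, map_add]
  cases n with
  | zero =>
    rw [PowerSeries.coeff_zero_X_mul, PowerSeries.coeff_zero_X_mul]
    rw [PowerSeries.coeff_zero_eq_constantCoeff_apply, constantCoeff_u]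
    simp
  | succ n =>
    rw [PowerSeries.coeff_succ_X_mul, PowerSeries.coeff_succ_X_mul,
      PowerSeries.coeff_derivative, PowerSeries.coeff_one]
    rw [u, PowerSeries.coeff_mk, PowerSeries.coeff_mk]
    have h1 : ((n + 1 + 1).factorial : ℝ) = (n + 2) * (n + 1).factorial := by
      rw [show n + 1 + 1 = (n + 1) + 1 by ring, Nat.factorial_succ]
      push_cast; ring
    have h2 : ((n + 1).factorial : ℝ) ≠ 0 := Nat.cast_ne_zero.2 (Nat.factorial_ne_zero _)
    have h3 : ((-1 : ℝ)) ^ (n + 1) = -(-1) ^ n := by rw [pow_succ]; ring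
    simp only [if_neg (Nat.succ_ne_zero n)]
    rw [h3, h1]
    field_simp
    ring

lemma deriv_E (c : ℝ) : d⁄dX ℝ (E c) = PowerSeries.C (R := ℝ) c * E c := by
  ext n
  rw [PowerSeries.coeff_derivative, PowerSeries.coeff_C_mul, coeff_E, coeff_E]
  have h1 : ((n + 1).factorial : ℝ) = (n + 1) * n.factorial := by
    rw [Nat.factorial_succ]; push_cast; ring
  have h2 : ((n).factorial : ℝ) ≠ 0 := Nat.cast_ne_zero.2 (Nat.factorial_ne_zero _)
  rw [h1, pow_succ]
  field_simp

lemma deriv_upow (m : ℕ) :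
    d⁄dX ℝ ((u⁻¹) ^ (m+1)) =
      -(((m+1) : ℕ) : PowerSeries ℝ) * ((u⁻¹) ^ (m+2) * d⁄dX ℝ u) := by
  have h1 := Derivation.leibniz_pow (D := d⁄dX ℝ) (a := u⁻¹) (m+1)
  simp only [Nat.add_sub_cancel] at h1
  rw [h1, PowerSeries.derivative_inv']
  simp only [smul_eq_mul, nsmul_eq_mul]
  have hp : (u⁻¹) ^ (m+2) = (u⁻¹) ^ m * (u⁻¹) ^ 2 := by rw [← pow_add]
  rw [hp]
  push_cast
  ring

lemma deriv_A (c : ℝ) (m : ℕ) :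
    d⁄dX ℝ (E c * (u⁻¹) ^ (m+1)) =
      PowerSeries.C (R := ℝ) c * (E c * (u⁻¹) ^ (m+1))
        - (((m+1) : ℕ) : PowerSeries ℝ) * (E c * ((u⁻¹) ^ (m+2) * d⁄dX ℝ u)) := by
  have h := Derivation.leibniz (d⁄dX ℝ) (E c) ((u⁻¹) ^ (m+1))
  rw [h, deriv_upow, deriv_E]
  simp only [smul_eq_mul]
  ring

lemma series_rec (c : ℝ) (m : ℕ) :
    E c * (u⁻¹) ^ (m+2) =
      PowerSeries.X * (E c * (u⁻¹) ^ (m+1))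
        + PowerSeries.X * (E c * ((u⁻¹) ^ (m+2) * d⁄dX ℝ u))
        + E c * (u⁻¹) ^ (m+1) := by
  have h3 : (u⁻¹ : PowerSeries ℝ) ^ (m+2) * u = (u⁻¹) ^ (m+1) := by
    rw [pow_succ, mul_assoc, inv_mul_u, mul_one]
  linear_combination (-(E c) * (u⁻¹) ^ (m+2)) * key_u
    + ((PowerSeries.X + 1) * E c) * h3

lemma coeff_rec (c : ℝ) (m : ℕ) :
    PowerSeries.coeff (R := ℝ) (m+1) (E c * (u⁻¹) ^ (m+2)) =
      (c / (m+1) + 1) * PowerSeries.coeff (R := ℝ) m (E c * (u⁻¹) ^ (m+1)) := by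
  have hm1 : ((m : ℝ) + 1) ≠ 0 := by positivity
  set A := E c * (u⁻¹) ^ (m+1) with hA
  set T : ℝ := PowerSeries.coeff (R := ℝ) m (E c * ((u⁻¹) ^ (m+2) * d⁄dX ℝ u)) with hT
  have h1 : ((m : ℝ) + 1) * PowerSeries.coeff (R := ℝ) (m+1) A =
      c * PowerSeries.coeff (R := ℝ) m A - ((m : ℝ)+1) * T := by
    have := congrArg (fun f => PowerSeries.coeff (R := ℝ) m f) (deriv_A c m)
    rw [PowerSeries.coeff_derivative, map_sub, PowerSeries.coeff_C_mul] at this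
    have hnat : ((((m+1) : ℕ) : PowerSeries ℝ)) = PowerSeries.C (R := ℝ) (((m+1) : ℕ) : ℝ) := by
      rw [map_natCast]
    rw [hnat, PowerSeries.coeff_C_mul] at this
    push_cast at this
    rw [← hA, ← hT] at this
    linarith [this]
  have h2 : PowerSeries.coeff (R := ℝ) (m+1) (E c * (u⁻¹) ^ (m+2)) =
      PowerSeries.coeff (R := ℝ) m A + T + PowerSeries.coeff (R := ℝ) (m+1) A := by
    have := congrArg (fun f => PowerSeries.coeff (R := ℝ) (m+1) f) (series_rec c m)
    rw [map_add, map_add, PowerSeries.coeff_succ_X_mul, PowerSeries.coeff_succ_X_mul] at this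
    rw [← hA, ← hT] at this
    exact this
  rw [h2]
  have hT' : T = (c * PowerSeries.coeff (R := ℝ) m A - ((m:ℝ)+1) * PowerSeries.coeff (R := ℝ) (m+1) A)
      / ((m:ℝ)+1) := by
    field_simp
    linarith [h1]
  rw [hT']
  field_simp
  ring

lemma coeff_EV (c : ℝ) : ∀ m : ℕ,
    PowerSeries.coeff (R := ℝ) m (E c * (u⁻¹) ^ (m+1)) =
      (∏ j ∈ Finset.range m, (c + j + 1)) / m.factorial := by
  intro m
  induction m with
  | zero =>
    rw [pow_one, PowerSeries.coeff_zero_eq_constantCoeff_apply, map_mul, constantCoeff_E,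
      PowerSeries.constantCoeff_inv, constantCoeff_u]
    simp
  | succ m ih =>
    rw [coeff_rec, ih, Finset.prod_range_succ]
    have h2 : ((m).factorial : ℝ) ≠ 0 := Nat.cast_ne_zero.2 (Nat.factorial_ne_zero _)
    have h3 : ((m+1).factorial : ℝ) = (m+1) * m.factorial := by
      rw [Nat.factorial_succ]; push_cast; ring
    have hm1 : ((m : ℝ) + 1) ≠ 0 := by positivity
    rw [h3]
    field_simp
    ring



lemma E_zero : E 0 = 1 := by
  ext n
  rw [coeff_E, PowerSeries.coeff_one]
  cases n with
  | zero => simp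
  | succ n => simp [Nat.succ_ne_zero]

lemma E_pow (c : ℝ) (j : ℕ) : (E c) ^ j = E (j * c) := by
  induction j with
  | zero => simp [E_zero]
  | succ j ih =>
    rw [pow_succ, ih, E_mul_E]
    congr 1
    push_cast
    ring

lemma one_sub_E_eq_X_mul_u : 1 - E (-1) = PowerSeries.X * u := by
  ext n
  cases n with
  | zero =>
    rw [PowerSeries.coeff_zero_X_mul, map_sub, PowerSeries.coeff_zero_eq_constantCoeff_apply,
      PowerSeries.coeff_zero_eq_constantCoeff_apply]
    have : PowerSeries.constantCoeff (R := ℝ) (E (-1)) = 1 := by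
      rw [← PowerSeries.coeff_zero_eq_constantCoeff_apply, coeff_E]; simp
    rw [map_one, this]; ring
  | succ n =>
    rw [PowerSeries.coeff_succ_X_mul, map_sub, coeff_E, PowerSeries.coeff_one,
      if_neg (Nat.succ_ne_zero n), u, PowerSeries.coeff_mk]
    rw [show ((-1:ℝ)) ^ (n+1) = -(-1)^n by rw [pow_succ]; ring]
    ring

/-- Formal binomial expansion of `(1 - e^{-X})^d`. -/
lemma W_eq_sum (d : ℕ) :
    (1 - E (-1)) ^ d =
      ∑ k ∈ Finset.range (d+1),
        PowerSeries.C (R := ℝ) ((-1)^k * (d.choose k : ℝ)) * E (-(k:ℝ)) := by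
  have h : (1 - E (-1)) = (-(E (-1))) + 1 := by ring
  rw [h, add_pow]
  refine Finset.sum_congr rfl fun k hk => ?_
  rw [one_pow, mul_one]
  have h1 : (-(E (-1))) ^ k = (-1 : PowerSeries ℝ) ^ k * (E (-1)) ^ k := by
    rw [← neg_one_mul, mul_pow]
  rw [h1, E_pow]
  have h2 : ((-1 : PowerSeries ℝ)) ^ k = PowerSeries.C (R := ℝ) ((-1)^k) := by
    rw [map_pow, map_neg, map_one]
  have h3 : ((d.choose k : ℕ) : PowerSeries ℝ) = PowerSeries.C (R := ℝ) ((d.choose k : ℝ)) := by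
    rw [map_natCast]
  rw [h2, h3, show ((k:ℝ)) * (-1) = -(k:ℝ) by ring]
  rw [map_mul]
  ring

lemma coeff_W (d m : ℕ) :
    PowerSeries.coeff (R := ℝ) m ((1 - E (-1)) ^ d) =
      ∑ k ∈ Finset.range (d+1), (-1)^k * (d.choose k : ℝ) * ((-(k:ℝ))^m / m.factorial) := by
  rw [W_eq_sum, map_sum]
  refine Finset.sum_congr rfl fun k _ => ?_
  rw [PowerSeries.coeff_C_mul, coeff_E]

/-- Real binomial expansion of `(1 - e^{-t})^d`. -/
lemma real_W (d : ℕ) (t : ℝ) :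
    (1 - Real.exp (-t)) ^ d =
      ∑ k ∈ Finset.range (d+1), (-1)^k * (d.choose k : ℝ) * Real.exp (-(k * t)) := by
  have h : (1 - Real.exp (-t)) = (-(Real.exp (-t))) + 1 := by ring
  rw [h, add_pow]
  refine Finset.sum_congr rfl fun k hk => ?_
  rw [one_pow, mul_one]
  have h1 : (-(Real.exp (-t))) ^ k = (-1 : ℝ) ^ k * (Real.exp (-t)) ^ k := by
    rw [← neg_one_mul, mul_pow]
  rw [h1, ← Real.exp_nat_mul]
  rw [show (k : ℝ) * (-t) = -(k * t) by ring]
  ring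

/-- `∑ m, β m t^m = (1 - e^{-t})^d` with `β` the coefficients of the formal series. -/
lemma hasSum_W (d : ℕ) (t : ℝ) :
    HasSum (fun m => PowerSeries.coeff (R := ℝ) m ((1 - E (-1)) ^ d) * t ^ m)
      ((1 - Real.exp (-t)) ^ d) := by
  have hterm : ∀ k ∈ Finset.range (d+1),
      HasSum (fun m => (-1)^k * (d.choose k : ℝ) * ((-(k:ℝ) * t) ^ m / m.factorial))
        ((-1)^k * (d.choose k : ℝ) * Real.exp (-(k * t))) := by
    intro k _
    have h := NormedSpace.expSeries_div_hasSum_exp (-(k:ℝ) * t)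
    rw [← Real.exp_eq_exp_ℝ] at h
    have := h.mul_left ((-1)^k * (d.choose k : ℝ))
    rw [show -((k:ℝ) * t) = -(k:ℝ) * t by ring]
    exact this
  have hsum := hasSum_sum hterm
  rw [← real_W] at hsum
  have hfun : (fun m => PowerSeries.coeff (R := ℝ) m ((1 - E (-1)) ^ d) * t ^ m) =
      fun m => ∑ k ∈ Finset.range (d+1),
        (-1)^k * (d.choose k : ℝ) * ((-(k:ℝ) * t) ^ m / m.factorial) := by
    funext m
    rw [coeff_W, Finset.sum_mul]
    refine Finset.sum_congr rfl fun k _ => ?_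
    rw [mul_pow]
    ring
  rw [hfun]
  exact hsum



lemma summable_norm_W (d : ℕ) (t : ℝ) :
    Summable fun m => ‖PowerSeries.coeff (R := ℝ) m ((1 - E (-1)) ^ d) * t ^ m‖ := by
  have hbig : Summable fun m => ∑ k ∈ Finset.range (d+1),
      ‖(-1:ℝ)^k * (d.choose k : ℝ) * ((-(k:ℝ) * t) ^ m / m.factorial)‖ := by
    refine summable_sum fun k _ => ?_
    have h1 : Summable fun m => ‖(-(k:ℝ) * t) ^ m / (m.factorial : ℝ)‖ := by
      have := Real.summable_pow_div_factorial ‖(-(k:ℝ) * t)‖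
      refine this.congr fun m => ?_
      rw [norm_div, norm_pow]
      simp [Nat.abs_cast]
    exact (h1.mul_left _).congr fun m => by rw [norm_mul]
  refine Summable.of_nonneg_of_le (fun m => norm_nonneg _) (fun m => ?_) hbig
  have hfun : PowerSeries.coeff (R := ℝ) m ((1 - E (-1)) ^ d) * t ^ m =
      ∑ k ∈ Finset.range (d+1),
        (-1)^k * (d.choose k : ℝ) * ((-(k:ℝ) * t) ^ m / m.factorial) := by
    rw [coeff_W, Finset.sum_mul]
    refine Finset.sum_congr rfl fun k _ => ?_
    rw [mul_pow]
    ring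
  rw [hfun]
  exact norm_sum_le _ _

/-- From the generating hypothesis, the sum of the `S`-series on `(0,1)`. -/
lemma S_sum (d : ℕ) (a : ℝ) (B : ℕ → ℝ)
    (hB : ∀ t ∈ Set.Ioo (0 : ℝ) 1,
      Real.exp (-a * t) / (1 - Real.exp (-t)) ^ d =
        (-1) ^ d * ∑' n : ℕ, (-t) ^ ((n : ℤ) - d) / n.factorial * B n)
    {t : ℝ} (ht : t ∈ Set.Ioo (0:ℝ) 1) :
    Summable (fun n => ((-1)^n * B n / n.factorial) * t ^ n) ∧
      ∑' n, ((-1)^n * B n / n.factorial) * t ^ n =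
        t ^ d * (Real.exp (-a * t) / (1 - Real.exp (-t)) ^ d) := by
  obtain ⟨ht0, ht1⟩ := ht
  have htne : t ≠ 0 := ne_of_gt ht0
  have hden : (0:ℝ) < 1 - Real.exp (-t) := by
    have : Real.exp (-t) < 1 := Real.exp_lt_one_iff.2 (by linarith)
    linarith
  have hpos : 0 < Real.exp (-a * t) / (1 - Real.exp (-t)) ^ d := by positivity
  have hq := hB t ⟨ht0, ht1⟩
  set q : ℕ → ℝ := fun n => (-t) ^ ((n : ℤ) - d) / n.factorial * B n with hqdef
  have hqsum : Summable q := by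
    by_contra hns
    rw [tsum_eq_zero_of_not_summable hns, mul_zero] at hq
    exact absurd hq (ne_of_gt hpos)
  have hterm : ∀ n, ((-1)^n * B n / n.factorial) * t ^ n = ((-1)^d * t^d) * q n := by
    intro n
    have hnt : (-t : ℝ) ≠ 0 := neg_ne_zero.2 htne
    have hz : (-t : ℝ) ^ ((n : ℤ) - d) = (-t)^n / (-t)^d := by
      rw [zpow_sub₀ hnt, zpow_natCast, zpow_natCast]
    have hneg : (-t : ℝ)^n = (-1)^n * t^n := by rw [← neg_one_mul, mul_pow]
    have hnegd : (-t : ℝ)^d = (-1)^d * t^d := by rw [← neg_one_mul, mul_pow]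
    have htd : ((-1:ℝ)^d * t^d) ≠ 0 := by
      apply mul_ne_zero (pow_ne_zero _ (by norm_num)) (pow_ne_zero _ htne)
    have e1 : ((-1:ℝ)^d * t^d) * ((-t : ℝ) ^ ((n : ℤ) - d)) = (-1)^n * t^n := by
      rw [hz, hneg, hnegd]
      field_simp
    have e2 : ((-1:ℝ)^d * t^d) * q n
        = (((-1:ℝ)^d * t^d) * ((-t : ℝ) ^ ((n : ℤ) - d))) / n.factorial * B n := by
      rw [hqdef]; ring
    rw [e2, e1]
    ring
  have hsumm : Summable (fun n => ((-1)^n * B n / n.factorial) * t ^ n) := by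
    refine (hqsum.mul_left ((-1)^d * t^d)).congr fun n => (hterm n).symm
  refine ⟨hsumm, ?_⟩
  have : ∑' n, ((-1)^n * B n / n.factorial) * t ^ n = ((-1)^d * t^d) * ∑' n, q n := by
    rw [← tsum_mul_left]
    exact tsum_congr hterm
  rw [this]
  have hq2 : ((-1:ℝ))^d * (Real.exp (-a * t) / (1 - Real.exp (-t)) ^ d)
      = ((-1:ℝ))^d * ((-1) ^ d * ∑' n, q n) := by rw [hq]
  have hsq : ((-1:ℝ)^d) * ((-1:ℝ)^d) = 1 := by
    rw [← pow_add, ← two_mul, pow_mul]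
    norm_num
  rw [← mul_assoc, hsq, one_mul] at hq2
  linear_combination (t^d * (Real.exp (-a*t)/(1-Real.exp (-t))^d)) * hsq
    - ((-1:ℝ)^d * t^d) * hq2

/-- The main formal identity: the `B`-generating series equals `e^{-aX} u^{-d}`. -/
lemma S_eq (d : ℕ) (a : ℝ) (ha : 0 < a) (B : ℕ → ℝ)
    (hB : ∀ t ∈ Set.Ioo (0 : ℝ) 1,
      Real.exp (-a * t) / (1 - Real.exp (-t)) ^ d =
        (-1) ^ d * ∑' n : ℕ, (-t) ^ ((n : ℤ) - d) / n.factorial * B n) :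
    ∀ n, (-1)^n * B n / n.factorial =
      PowerSeries.coeff (R := ℝ) n (E (-a) * (u⁻¹) ^ d) := by
  set S : PowerSeries ℝ := PowerSeries.mk fun n => (-1)^n * B n / n.factorial with hSdef
  have hScoeff : ∀ n, PowerSeries.coeff (R := ℝ) n S = (-1)^n * B n / n.factorial := fun n =>
    PowerSeries.coeff_mk _ _
  -- step: for t ∈ (0, 1/2), Cauchy product identity
  have key : ∀ t ∈ Set.Ioo (0:ℝ) (1/2 : ℝ),
      (Summable fun n => PowerSeries.coeff (R := ℝ) n (S * (1 - E (-1))^d) * t ^ n) ∧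
      ∑' n, PowerSeries.coeff (R := ℝ) n (S * (1 - E (-1))^d) * t ^ n
        = t ^ d * Real.exp (-a * t) := by
    intro t ht
    have ht1 : t ∈ Set.Ioo (0:ℝ) 1 := ⟨ht.1, lt_trans ht.2 (by norm_num)⟩
    have h34 : (3/4 : ℝ) ∈ Set.Ioo (0:ℝ) 1 := by norm_num
    have hS34 : Summable fun n => PowerSeries.coeff (R := ℝ) n S * (3/4:ℝ) ^ n := by
      refine ((S_sum d a B hB h34).1).congr fun n => ?_
      rw [hScoeff]
    have hSn : Summable fun n => ‖PowerSeries.coeff (R := ℝ) n S * t ^ n‖ := by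
      have := abs_summable_of_lt (by norm_num : (0:ℝ) < 3/4) hS34
        (t := t) (by rw [abs_of_pos ht.1]; linarith [ht.2])
      exact this.congr fun n => (Real.norm_eq_abs _).symm
    have hWn := summable_norm_W d t
    have hcauchy := tsum_mul_tsum_eq_tsum_sum_antidiagonal_of_summable_norm hSn hWn
    have hSsum := S_sum d a B hB ht1
    have hWsum := hasSum_W d t
    rw [(tsum_congr (fun n => by rw [hScoeff]) : ∑' n, PowerSeries.coeff (R := ℝ) n S * t^n = _),
      hSsum.2, hWsum.tsum_eq] at hcauchy
    have hden : (0:ℝ) < 1 - Real.exp (-t) := by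
      have : Real.exp (-t) < 1 := Real.exp_lt_one_iff.2 (by linarith [ht1.1])
      linarith
    have hlhs : t ^ d * (Real.exp (-a * t) / (1 - Real.exp (-t)) ^ d) *
        (1 - Real.exp (-t)) ^ d = t ^ d * Real.exp (-a * t) := by
      field_simp
    rw [hlhs] at hcauchy
    have hinner : ∀ n : ℕ, (∑ kl ∈ Finset.HasAntidiagonal.antidiagonal n,
        (PowerSeries.coeff (R := ℝ) kl.1 S * t ^ kl.1) *
          (PowerSeries.coeff (R := ℝ) kl.2 ((1 - E (-1))^d) * t ^ kl.2)) =
        PowerSeries.coeff (R := ℝ) n (S * (1 - E (-1))^d) * t ^ n := by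
      intro n
      rw [PowerSeries.coeff_mul, Finset.sum_mul]
      refine Finset.sum_congr rfl fun kl hkl => ?_
      have := Finset.HasAntidiagonal.mem_antidiagonal.1 hkl
      rw [← this, pow_add]
      ring
    constructor
    · have hs := summable_norm_sum_mul_antidiagonal_of_summable_norm hSn hWn
      have := hs.of_norm
      refine this.congr fun n => ?_
      exact hinner n
    · rw [hcauchy]
      exact tsum_congr fun n => (hinner n).symm
  -- step: RHS series
  have key2 : ∀ t ∈ Set.Ioo (0:ℝ) (1/2 : ℝ),
      HasSum (fun n => PowerSeries.coeff (R := ℝ) n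
        ((PowerSeries.X)^d * E (-a) : PowerSeries ℝ) * t ^ n) (t ^ d * Real.exp (-a * t)) := by
    intro t ht
    have hexp := NormedSpace.expSeries_div_hasSum_exp (-a * t)
    rw [← Real.exp_eq_exp_ℝ] at hexp
    have hexp2 := hexp.mul_left (t ^ d)
    have hinj : Function.Injective (fun m : ℕ => m + d) := add_left_injective d
    refine (Function.Injective.hasSum_iff hinj ?_).1 ?_
    · intro n hn
      simp only [Set.mem_range, not_exists] at hn
      have hnd : n < d := by
        by_contra hc
        push_neg at hc
        exact hn (n - d) (show n - d + d = n by omega)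
      rw [PowerSeries.coeff_X_pow_mul' _ _ _, if_neg (by omega), zero_mul]
    · refine hexp2.congr_fun fun m => ?_
      simp only [Function.comp]
      rw [PowerSeries.coeff_X_pow_mul' _ _ _, if_pos (by omega),
        Nat.add_sub_cancel, coeff_E]
      rw [pow_add, mul_pow]
      ring
  -- uniqueness
  have hformal : S * (1 - E (-1))^d = (PowerSeries.X)^d * E (-a) := by
    ext n
    have := eq_zero_of_tsum_zero (by norm_num : (0:ℝ) < 1/2) n
      (fun k => PowerSeries.coeff (R := ℝ) k (S * (1 - E (-1))^d)
        - PowerSeries.coeff (R := ℝ) k ((PowerSeries.X)^d * E (-a)))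
      (fun t ht => by
        refine Summable.congr (((key t ht).1).sub (key2 t ht).summable) fun k => ?_
        ring)
      (fun t ht => by
        have h1 := (key t ht).2
        have h2 := (key2 t ht).tsum_eq
        have hsub := Summable.tsum_sub ((key t ht).1) (key2 t ht).summable
        have : ∑' k, (PowerSeries.coeff (R := ℝ) k (S * (1 - E (-1))^d) * t ^ k
            - PowerSeries.coeff (R := ℝ) k ((PowerSeries.X)^d * E (-a)) * t ^ k) = 0 := by
          rw [hsub, h1, h2, sub_self]
        rw [← this]
        refine tsum_congr fun k => ?_
        ring)
    have h0 : PowerSeries.coeff (R := ℝ) n (S * (1 - E (-1))^d)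
        - PowerSeries.coeff (R := ℝ) n ((PowerSeries.X)^d * E (-a)) = 0 := this
    linarith
  -- cancel X^d
  have hXu : S * (1 - E (-1))^d = (PowerSeries.X)^d * (S * u ^ d) := by
    rw [one_sub_E_eq_X_mul_u, mul_pow]
    ring
  rw [hXu] at hformal
  have hXne : (PowerSeries.X : PowerSeries ℝ) ^ d ≠ 0 :=
    pow_ne_zero _ PowerSeries.X_ne_zero
  have hcancel : S * u ^ d = E (-a) := mul_left_cancel₀ hXne hformal
  have hfinal : S = E (-a) * (u⁻¹) ^ d := by
    have h1 : (u⁻¹ : PowerSeries ℝ) ^ d * u ^ d = 1 := by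
      rw [← mul_pow, inv_mul_u, one_pow]
    calc S = S * (u ^ d * (u⁻¹) ^ d) := by
            rw [show u ^ d * (u⁻¹:PowerSeries ℝ) ^ d = 1 by rw [← mul_pow,
              PowerSeries.mul_inv_cancel u u_ne, one_pow], mul_one]
      _ = (S * u ^ d) * (u⁻¹) ^ d := by ring
      _ = E (-a) * (u⁻¹) ^ d := by rw [hcancel]
  intro n
  rw [← hScoeff n, hfinal]



lemma nat_prod (m : ℕ) : ∀ n : ℕ,
    (∏ j ∈ Finset.range m, (n + j + 1)) = m.factorial * (m + n).choose n := by
  intro n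
  have key : (∏ j ∈ Finset.range m, (n + j + 1)) * n.factorial = (m + n).factorial := by
    induction m with
    | zero => simp
    | succ m ih =>
      rw [Finset.prod_range_succ, show m + 1 + n = (m + n) + 1 by omega, Nat.factorial_succ,
        ← ih]
      ring
  have h2 : (m + n).choose n * n.factorial * m.factorial = (m + n).factorial := by
    have := Nat.choose_mul_factorial_mul_factorial (Nat.le_add_left n m)
    rw [show m + n - n = m by omega] at this
    exact this
  apply Nat.eq_of_mul_eq_mul_right (Nat.factorial_pos n)
  rw [key, ← h2]
  ring

lemma evalP (d : ℕ) (hd : 1 ≤ d) (a y : ℝ) :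
    ∑ k ∈ Finset.range d,
        (PowerSeries.coeff (R := ℝ) (d - 1 - k) (E (-a) * (u⁻¹) ^ d) / k.factorial) * y ^ k =
      (∏ j ∈ Finset.range (d-1), (y - a + j + 1)) / (d-1).factorial := by
  obtain ⟨m, rfl⟩ : ∃ m, d = m + 1 := ⟨d - 1, by omega⟩
  have h1 : PowerSeries.coeff (R := ℝ) m (E y * (E (-a) * (u⁻¹) ^ (m+1))) =
      (∏ j ∈ Finset.range m, (y - a + j + 1)) / m.factorial := by
    rw [← mul_assoc, E_mul_E, show y + -a = y - a by ring]
    exact coeff_EV (y - a) m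
  rw [show m + 1 - 1 = m by omega]
  rw [← h1, PowerSeries.coeff_mul, Finset.Nat.sum_antidiagonal_eq_sum_range_succ_mk]
  refine Finset.sum_congr rfl fun k hk => ?_
  simp only []
  rw [coeff_E]
  ring




end BarnesAux

open BarnesAux HurwitzZeta

open Filter Topology in
/-- Residues of the Barnes zeta function in terms of generalized Bernoulli
polynomials.  Suppose `B n = B_n^{(d)}(a)` satisfies the generating identity
`e^{−at}/(1−e^{−t})^d = (−1)^d ∑_{n≥0} (−t)^{n−d}/n! · B n` for small `t > 0`.
Then for each `z ∈ {1,…,d}`, the meromorphic continuation of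
`ζ_B(s,a) = ∑_{n≥0} C(d+n−1,n)(n+a)^{−s}` has residue
`(−1)^{d+z}/((z−1)!(d−z)!) · B (d−z)` at `s = z`. -/
theorem barnes_zeta_residues_bernoulli (d : ℕ) (hd : 1 ≤ d) (a : ℝ) (ha : 0 < a)
    (B : ℕ → ℝ)
    (hB : ∀ t ∈ Set.Ioo (0 : ℝ) 1,
      Real.exp (-a * t) / (1 - Real.exp (-t)) ^ d =
        (-1) ^ d * ∑' n : ℕ, (-t) ^ ((n : ℤ) - d) / n.factorial * B n)
    (z : ℕ) (hz1 : 1 ≤ z) (hzd : z ≤ d) :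
    ∃ g : ℂ → ℂ,
      AnalyticOnNhd ℂ g
        ({w : ℂ | 0 < w.re} \ {w : ℂ | ∃ k : ℕ, 1 ≤ k ∧ k ≤ d ∧ w = (k : ℂ)}) ∧
      (∀ s : ℂ, (d : ℝ) < s.re →
        g s = ∑' n : ℕ, ((d + n - 1).choose n : ℂ) * ((n : ℂ) + a) ^ (-s)) ∧
      Tendsto (fun s : ℂ => (s - (z : ℂ)) * g s) (𝓝[≠] (z : ℂ))
        (𝓝 ((-1 : ℂ) ^ (d + z) / ((z - 1).factorial * (d - z).factorial) * B (d - z))) := by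
  classical
  set hc : ℕ → ℝ := fun m => PowerSeries.coeff (R := ℝ) m (E (-a) * (u⁻¹) ^ d) with hhc
  set e : ℕ → ℝ := fun k => hc (d - 1 - k) / k.factorial with he
  -- the evaluation identity
  have echoose : ∀ n : ℕ, ∑ k ∈ Finset.range d, e k * ((n:ℝ) + a) ^ k
      = ((d + n - 1).choose n : ℝ) := by
    intro n
    have h1 := evalP d hd a ((n:ℝ) + a)
    have h2 : ∀ k, e k = hc (d-1-k) / k.factorial := fun k => rfl
    calc ∑ k ∈ Finset.range d, e k * ((n:ℝ) + a) ^ k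
        = ∑ k ∈ Finset.range d,
            (PowerSeries.coeff (R := ℝ) (d - 1 - k) (E (-a) * (u⁻¹) ^ d) / k.factorial)
              * ((n:ℝ) + a) ^ k := rfl
      _ = (∏ j ∈ Finset.range (d-1), ((n:ℝ) + a - a + j + 1)) / (d-1).factorial := h1
      _ = ((d + n - 1).choose n : ℝ) := by
          have hnat := nat_prod (d-1) n
          have hcast : (∏ j ∈ Finset.range (d-1), ((n:ℝ) + a - a + j + 1))
              = ((∏ j ∈ Finset.range (d-1), (n + j + 1) : ℕ) : ℝ) := by
            push_cast
            refine Finset.prod_congr rfl fun j _ => by ring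
          rw [hcast, hnat]
          have hch : (d - 1 + n).choose n = (d + n - 1).choose n := by
            congr 1
            omega
          rw [hch]
          push_cast
          have hfne : ((d-1).factorial : ℝ) ≠ 0 := Nat.cast_ne_zero.2 (Nat.factorial_ne_zero _)
          field_simp
  -- B in terms of hc
  have hBhc : ∀ n, B n = (-1:ℝ)^n * n.factorial * hc n := by
    intro n
    have h1 := S_eq d a ha B hB n
    have hsq : (-1:ℝ)^n * (-1:ℝ)^n = 1 := by
      rw [← pow_add, ← two_mul, pow_mul]
      norm_num
    have hfne : ((n).factorial : ℝ) ≠ 0 := Nat.cast_ne_zero.2 (Nat.factorial_ne_zero _)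
    have h2 : (-1:ℝ)^n * B n = n.factorial * hc n := by
      rw [hhc]
      field_simp at h1
      linarith [h1]
    calc B n = ((-1:ℝ)^n * (-1:ℝ)^n) * B n := by rw [hsq]; ring
      _ = (-1:ℝ)^n * ((-1:ℝ)^n * B n) := by ring
      _ = (-1:ℝ)^n * (n.factorial * hc n) := by rw [h2]
      _ = (-1:ℝ)^n * n.factorial * hc n := by ring
  -- setup of the shifted Hurwitz zeta function
  set N : ℕ := ⌈a⌉₊ - 1 with hN
  set b : ℝ := a - N with hbdef
  have hceil1 : 1 ≤ ⌈a⌉₊ := Nat.one_le_ceil_iff.2 ha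
  have hNcast : (N : ℝ) = (⌈a⌉₊ : ℝ) - 1 := by
    rw [hN, Nat.cast_sub hceil1, Nat.cast_one]
  have hb0 : 0 < b := by
    rw [hbdef, hNcast]
    have := Nat.ceil_lt_add_one ha.le
    linarith
  have hb1 : b ≤ 1 := by
    rw [hbdef, hNcast]
    have := Nat.le_ceil a
    linarith
  have hNa : (N:ℝ) + b = a := by rw [hbdef]; ring
  have hbmem : b ∈ Set.Icc (0:ℝ) 1 := ⟨hb0.le, hb1⟩
  set F : ℂ → ℂ := fun s => hurwitzZeta (b : UnitAddCircle) s
      - ∑ n ∈ Finset.range N, ((n:ℂ) + (b:ℂ)) ^ (-s) with hFdef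
  have hbne : ∀ n : ℕ, ((n:ℂ) + (b:ℂ)) ≠ 0 := by
    intro n
    have h1 : ((n:ℂ) + (b:ℂ)) = (((n:ℝ) + b : ℝ) : ℂ) := by push_cast; ring
    rw [h1]
    exact Complex.ofReal_ne_zero.2 (by positivity)
  have hane : ∀ n : ℕ, ((n:ℂ) + (a:ℂ)) ≠ 0 := by
    intro n
    have h1 : ((n:ℂ) + (a:ℂ)) = (((n:ℝ) + a : ℝ) : ℂ) := by push_cast; ring
    rw [h1]
    exact Complex.ofReal_ne_zero.2 (by positivity)
  have hFdiff : ∀ s : ℂ, s ≠ 1 → DifferentiableAt ℂ F s := by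
    intro s hs
    refine (differentiableAt_hurwitzZeta _ hs).sub ?_
    refine DifferentiableAt.fun_sum fun n _ => ?_
    exact DifferentiableAt.const_cpow (differentiableAt_id.neg) (Or.inl (hbne n))
  have hFcont : ∀ s : ℂ, s ≠ 1 → ContinuousAt F s := fun s hs => (hFdiff s hs).continuousAt
  have hFsum : ∀ s : ℂ, 1 < s.re → HasSum (fun n : ℕ => ((n:ℂ) + (a:ℂ)) ^ (-s)) (F s) := by
    intro s hs
    have h0 := hasSum_hurwitzZeta_of_one_lt_re hbmem hs
    have h0' : HasSum (fun n : ℕ => ((n:ℂ) + (b:ℂ)) ^ (-s))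
        (hurwitzZeta (b:UnitAddCircle) s) := by
      refine h0.congr_fun fun n => ?_
      rw [Complex.cpow_neg, one_div]
    have heq : F s + ∑ i ∈ Finset.range N, ((i:ℂ) + (b:ℂ)) ^ (-s)
        = hurwitzZeta (b:UnitAddCircle) s := by
      rw [hFdef]; ring
    have h2 : HasSum (fun n : ℕ => (((n + N : ℕ):ℂ) + (b:ℂ)) ^ (-s)) (F s) := by
      refine (hasSum_nat_add_iff (f := fun n : ℕ => ((n:ℂ) + (b:ℂ)) ^ (-s)) N).2 ?_
      rw [heq]
      exact h0'
    refine h2.congr_fun fun n => ?_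
    have hNb : ((N:ℂ)) + (b:ℂ) = (a:ℂ) := by
      have := congrArg (fun x : ℝ => (x : ℂ)) hNa
      push_cast at this
      exact this
    rw [show (((n + N : ℕ)):ℂ) + (b:ℂ) = (n:ℂ) + (a:ℂ) by push_cast; linear_combination hNb]
  have hFres : Tendsto (fun s => (s - 1) * F s) (𝓝[≠] (1:ℂ)) (𝓝 1) := by
    have h1 := hurwitzZeta_residue_one (b : UnitAddCircle)
    have hcont : ContinuousAt (fun s : ℂ => ∑ n ∈ Finset.range N, ((n:ℂ)+(b:ℂ))^(-s)) 1 := by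
      refine DifferentiableAt.continuousAt (𝕜 := ℂ) ?_
      refine DifferentiableAt.fun_sum fun n _ => ?_
      exact DifferentiableAt.const_cpow (differentiableAt_id.neg) (Or.inl (hbne n))
    have h2 : Tendsto (fun s : ℂ => (s - 1) * ∑ n ∈ Finset.range N, ((n:ℂ)+(b:ℂ))^(-s))
        (𝓝 (1:ℂ)) (𝓝 0) := by
      have hsub : Tendsto (fun s : ℂ => s - 1) (𝓝 (1:ℂ)) (𝓝 0) := by
        simpa using (continuous_sub_right (1:ℂ)).tendsto 1
      have hcont' : Tendsto (fun s : ℂ => ∑ n ∈ Finset.range N, ((n:ℂ)+(b:ℂ))^(-s))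
          (𝓝 (1:ℂ)) (𝓝 (∑ n ∈ Finset.range N, ((n:ℂ)+(b:ℂ))^(-(1:ℂ)))) := hcont
      have := hsub.mul hcont'
      simpa using this
    have h2' := h2.mono_left (nhdsWithin_le_nhds (s := {(1:ℂ)}ᶜ))
    have := h1.sub h2'
    rw [sub_zero] at this
    refine this.congr fun s => ?_
    rw [hFdef]
    ring
  -- definition of g
  set g : ℂ → ℂ := fun s => ∑ k ∈ Finset.range d, ((e k : ℝ) : ℂ) * F (s - k) with hgdef
  have hnotpole : ∀ s : ℂ, s ∈ ({w : ℂ | 0 < w.re} \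
      {w : ℂ | ∃ k : ℕ, 1 ≤ k ∧ k ≤ d ∧ w = (k : ℂ)}) →
      ∀ k ∈ Finset.range d, s - (k:ℂ) ≠ 1 := by
    intro s hs k hk hcon
    refine hs.2 ⟨k+1, le_add_self.trans (le_refl _), ?_, ?_⟩
    · exact Nat.succ_le_of_lt (Finset.mem_range.1 hk)
    · push_cast
      linear_combination hcon
  refine ⟨g, ?_, ?_, ?_⟩
  · -- analyticity
    have hUopen : IsOpen ({w : ℂ | 0 < w.re} \
        {w : ℂ | ∃ k : ℕ, 1 ≤ k ∧ k ≤ d ∧ w = (k : ℂ)}) := by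
      refine IsOpen.sdiff (isOpen_lt continuous_const Complex.continuous_re) ?_
      have hfin : {w : ℂ | ∃ k : ℕ, 1 ≤ k ∧ k ≤ d ∧ w = (k : ℂ)} =
          (fun k : ℕ => (k:ℂ)) '' ((Finset.Icc 1 d : Finset ℕ) : Set ℕ) := by
        ext w
        simp only [Set.mem_setOf_eq, Set.mem_image, Finset.coe_Icc, Set.mem_Icc]
        constructor
        · rintro ⟨k, h1, h2, h3⟩; exact ⟨k, ⟨h1, h2⟩, h3.symm⟩
        · rintro ⟨k, ⟨h1, h2⟩, h3⟩; exact ⟨k, h1, h2, h3.symm⟩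
      rw [hfin]
      exact (Set.Finite.image _ (Finset.finite_toSet _)).isClosed
    refine DifferentiableOn.analyticOnNhd ?_ hUopen
    intro s hs
    refine DifferentiableAt.differentiableWithinAt ?_
    refine DifferentiableAt.fun_sum fun k hk => ?_
    refine DifferentiableAt.const_mul ?_ _
    have h1 : DifferentiableAt ℂ (fun w : ℂ => w - (k:ℂ)) s :=
      differentiableAt_id.sub (differentiableAt_const _)
    exact (hFdiff _ (hnotpole s hs k hk)).comp s h1
  · -- Dirichlet series
    intro s hsre
    have hterm : ∀ k ∈ Finset.range d,
        HasSum (fun n : ℕ => ((e k : ℝ):ℂ) * (((n:ℂ)+(a:ℂ)) ^ (-(s - (k:ℂ)))))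
          (((e k : ℝ):ℂ) * F (s - k)) := by
      intro k hk
      have hkd : (k:ℝ) + 1 ≤ d := by
        have := Finset.mem_range.1 hk
        exact_mod_cast Nat.succ_le_of_lt this
      have hre : 1 < (s - (k:ℂ)).re := by
        rw [Complex.sub_re, Complex.natCast_re]
        linarith
      exact (hFsum (s - k) hre).mul_left _
    have hsum := hasSum_sum hterm
    have hpt : ∀ n : ℕ,
        (∑ k ∈ Finset.range d, ((e k : ℝ):ℂ) * (((n:ℂ)+(a:ℂ)) ^ (-(s - (k:ℂ)))))
          = ((d + n - 1).choose n : ℂ) * ((n : ℂ) + a) ^ (-s) := by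
      intro n
      have hsplit : ∀ k : ℕ, ((n:ℂ)+(a:ℂ)) ^ (-(s - (k:ℂ)))
          = ((n:ℂ)+(a:ℂ)) ^ (k:ℕ) * ((n:ℂ)+(a:ℂ)) ^ (-s) := by
        intro k
        rw [show -(s - (k:ℂ)) = (k:ℂ) + (-s) by ring,
          Complex.cpow_add _ _ (hane n), Complex.cpow_natCast]
      simp only [hsplit]
      have hstep : (∑ k ∈ Finset.range d,
          ((e k : ℝ):ℂ) * (((n:ℂ)+(a:ℂ)) ^ (k:ℕ) * ((n:ℂ)+(a:ℂ)) ^ (-s)))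
          = (∑ k ∈ Finset.range d, ((e k : ℝ):ℂ) * ((n:ℂ)+(a:ℂ)) ^ (k:ℕ))
            * ((n:ℂ)+(a:ℂ)) ^ (-s) := by
        rw [Finset.sum_mul]
        exact Finset.sum_congr rfl fun k _ => by ring
      rw [hstep]
      congr 1
      have hxa : ((n:ℂ) + (a:ℂ)) = (((n:ℝ) + a : ℝ) : ℂ) := by push_cast; ring
      calc ∑ k ∈ Finset.range d, ((e k : ℝ):ℂ) * ((n:ℂ)+(a:ℂ)) ^ (k:ℕ)
          = ((∑ k ∈ Finset.range d, e k * ((n:ℝ) + a) ^ k : ℝ) : ℂ) := by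
            rw [Complex.ofReal_sum]
            refine Finset.sum_congr rfl fun k _ => ?_
            rw [hxa]
            push_cast
            ring
        _ = ((d + n - 1).choose n : ℂ) := by rw [echoose]; push_cast; rfl
    have hfinal := hsum.congr_fun (fun n => (hpt n).symm)
    exact hfinal.tsum_eq.symm
  · -- residue
    have hz1d : z - 1 ∈ Finset.range d := Finset.mem_range.2 (by omega)
    have hcast1 : ((z:ℂ)) - (((z-1 : ℕ)):ℂ) = 1 := by
      have : ((z - 1 : ℕ) : ℂ) = (z:ℂ) - 1 := by
        push_cast [Nat.cast_sub hz1]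
        ring
      rw [this]
      ring
    have hmap : Tendsto (fun s : ℂ => s - ((z-1:ℕ):ℂ)) (𝓝[≠] (z:ℂ)) (𝓝[≠] (1:ℂ)) := by
      refine Tendsto.inf ?_ ?_
      · simpa [hcast1] using (continuous_sub_right (((z-1:ℕ)):ℂ)).tendsto ((z:ℂ))
      · refine tendsto_principal_principal.2 fun s hs => ?_
        simp only [Set.mem_compl_iff, Set.mem_singleton_iff] at hs ⊢
        intro hcon
        apply hs
        have := hcast1
        linear_combination hcon - this
    have hterm : ∀ k ∈ Finset.range d,
        Tendsto (fun s : ℂ => (s - (z:ℂ)) * (((e k : ℝ):ℂ) * F (s - k)))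
          (𝓝[≠] (z:ℂ))
          (𝓝 (if k = z - 1 then ((e k : ℝ):ℂ) else 0)) := by
      intro k hk
      by_cases hkz : k = z - 1
      · subst hkz
        rw [if_pos rfl]
        have hcomp : Tendsto (fun s : ℂ => (s - ((z-1:ℕ):ℂ) - 1) * F (s - ((z-1:ℕ):ℂ)))
            (𝓝[≠] (z:ℂ)) (𝓝 1) := hFres.comp hmap
        have heq : (fun s : ℂ => (s - (z:ℂ)) * (((e (z-1) : ℝ):ℂ) * F (s - ((z-1:ℕ):ℂ))))
            = fun s : ℂ => ((e (z-1) : ℝ):ℂ)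
                * ((s - ((z-1:ℕ):ℂ) - 1) * F (s - ((z-1:ℕ):ℂ))) := by
          funext s
          have : s - (z:ℂ) = s - ((z-1:ℕ):ℂ) - 1 := by
            linear_combination - hcast1
          rw [this]
          ring
        rw [heq]
        have := hcomp.const_mul (((e (z-1) : ℝ):ℂ))
        simpa using this
      · rw [if_neg hkz]
        have hknez : ((z:ℂ)) - (k:ℂ) ≠ 1 := by
          intro hcon
          apply hkz
          have : (z:ℂ) = ((k+1 : ℕ):ℂ) := by push_cast; linear_combination hcon
          have hzk : z = k + 1 := Nat.cast_injective this
          omega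
        have h1 : Tendsto (fun s : ℂ => s - (z:ℂ)) (𝓝[≠] (z:ℂ)) (𝓝 0) := by
          have := ((continuous_sub_right ((z:ℂ))).tendsto ((z:ℂ))).mono_left
            (nhdsWithin_le_nhds (s := {(z:ℂ)}ᶜ))
          simpa using this
        have h2 : Tendsto (fun s : ℂ => F (s - (k:ℂ))) (𝓝[≠] (z:ℂ)) (𝓝 (F ((z:ℂ) - k))) := by
          have hc1 : Tendsto (fun s : ℂ => s - (k:ℂ)) (𝓝 (z:ℂ)) (𝓝 ((z:ℂ) - k)) :=
            (continuous_sub_right ((k:ℂ))).tendsto _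
          exact ((hFcont _ hknez).tendsto.comp hc1).mono_left nhdsWithin_le_nhds
        have := (h1.mul h2).const_mul (((e k : ℝ):ℂ))
        simpa using (h1.mul h2).const_mul (((e k : ℝ):ℂ)) |>.congr (fun s => by ring)
    have hsum := tendsto_finset_sum (Finset.range d) hterm
    have hval : ∑ k ∈ Finset.range d, (if k = z - 1 then ((e k : ℝ):ℂ) else 0)
        = ((e (z-1) : ℝ):ℂ) := by
      rw [Finset.sum_ite_eq' (Finset.range d) (z-1) (fun k => ((e k : ℝ):ℂ))]
      rw [if_pos hz1d]
    rw [hval] at hsum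
    have hfun : (fun s : ℂ => (s - (z:ℂ)) * g s)
        = fun s : ℂ => ∑ k ∈ Finset.range d,
            (s - (z:ℂ)) * (((e k : ℝ):ℂ) * F (s - k)) := by
      funext s
      rw [hgdef, Finset.mul_sum]
    rw [hfun]
    -- identify the limit value
    have hreal : (-1:ℝ)^(d+z) / ((z-1).factorial * (d-z).factorial) * B (d-z)
        = e (z-1) := by
      have h1 : e (z-1) = hc (d - z) / (z-1).factorial := by
        rw [he]
        simp only []
        rw [show d - 1 - (z-1) = d - z by omega]
      have h2 := hBhc (d-z)
      have hsq : (-1:ℝ)^(d+z) * (-1:ℝ)^(d-z) = 1 := by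
        rw [← pow_add, show d + z + (d - z) = 2*d by omega, pow_mul]
        norm_num
      have hfz : (((z-1).factorial : ℝ)) ≠ 0 := Nat.cast_ne_zero.2 (Nat.factorial_ne_zero _)
      have hfd : (((d-z).factorial : ℝ)) ≠ 0 := Nat.cast_ne_zero.2 (Nat.factorial_ne_zero _)
      rw [h1, h2]
      field_simp
      linear_combination hc (d-z) * hsq
    have hrealC : ((-1:ℂ)) ^ (d + z) / ((z - 1).factorial * (d - z).factorial) * (B (d - z) : ℂ)
        = ((e (z-1) : ℝ) : ℂ) := by
      rw [← hreal]
      push_cast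
      ring
    rw [hrealC]
    exact hsum
end
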